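/- arXiv:2510.21304 — 3 statements merged into one kernel-verified Lean document; each statement's English description precedes it below -/
import Mathlib

section
/- Let OpSpec be a basic operation specification and let CMod_1, CMod_2 be basic consistency models with CMod_1 ≼ CMod_2 (the context of every event under CMod_1 is contained in its context under CMod_2, in every abstract execution). Then every abstract execution valid w.r.t. (CMod_2, OpSpec) is also valid w.r.t. (CMod_1, OpSpec). -/
namespace AFC

/-! ## Events

Each event carries a unique identifier, a replica, a set of accessed objects, and a
partial map recording the value it writes to each object.  Initial events access every
object and write to all of them. -/

structure Evt (Obj Val Rep Id : Type) : Type where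
  ident : Id
  rep : Rep
  obj : Set Obj
  wval : Obj → Option Val
  isInit : Bool

/-- Well-formed initial event: accesses every object, with `wval` totally defined. -/
def Evt.InitWF {Obj Val Rep Id : Type} (e : Evt Obj Val Rep Id) : Prop :=
  e.isInit = true ∧ e.obj = Set.univ ∧ ∀ x, (e.wval x).isSome

/-! ## Histories -/

structure History (Obj Val Rep Id : Type) : Type where
  /-- the (finite) set of events of the history -/
  E : Set (Evt Obj Val Rep Id)
  finE : E.Finite
  /-- the distinguished initial event -/
  init : Evt Obj Val Rep Id
  /-- session order -/
  so : Evt Obj Val Rep Id → Evt Obj Val Rep Id → Prop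
  /-- `wrInv x r` is the (possibly empty) set of events read by `r` on object `x`
  (the inverse of the write-read relation, a total function). -/
  wrInv : Obj → Evt Obj Val Rep Id → Set (Evt Obj Val Rep Id)
  init_mem : init ∈ E
  init_wf : init.InitWF
  init_uniq : ∀ e ∈ E, e.isInit = true → e = init
  ids_inj : ∀ e ∈ E, ∀ e' ∈ E, e.ident = e'.ident → e = e'
  so_dom : ∀ e e', so e e' → e ∈ E ∧ e' ∈ E
  so_irrefl : ∀ e, ¬ so e e
  so_trans : ∀ e₁ e₂ e₃, so e₁ e₂ → so e₂ e₃ → so e₁ e₃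
  init_so : ∀ e ∈ E, e ≠ init → so init e
  so_rep : ∀ e ∈ E, ∀ e' ∈ E, e ≠ init → e' ≠ init → e ≠ e' →
    ((so e e' ∨ so e' e) ↔ e.rep = e'.rep)
  wr_dom : ∀ x e w, w ∈ wrInv x e → w ∈ E
  wr_reads_dom : ∀ x e, wrInv x e ≠ ∅ → e ∈ E
  acyclic : ∀ e, ¬ Relation.TransGen (fun a b => so a b ∨ ∃ x, a ∈ wrInv x b) e e

/-- The write-read relation of a history (union over all objects). -/
def History.wr {Obj Val Rep Id : Type} (h : History Obj Val Rep Id)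
    (w r : Evt Obj Val Rep Id) : Prop :=
  ∃ x, w ∈ h.wrInv x r

/-! ## Abstract executions -/

structure AExec (Obj Val Rep Id : Type) extends History Obj Val Rep Id where
  /-- receive-before relation -/
  rb : Evt Obj Val Rep Id → Evt Obj Val Rep Id → Prop
  /-- arbitration order -/
  ar : Evt Obj Val Rep Id → Evt Obj Val Rep Id → Prop
  rb_dom : ∀ e e', rb e e' → e ∈ E ∧ e' ∈ E
  rb_irrefl : ∀ e, ¬ rb e e
  rb_asymm : ∀ e e', rb e e' → ¬ rb e' e
  /-- `rb = rb ; so*` -/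
  rb_so_closed : ∀ e e', rb e e' ↔ ∃ c, rb e c ∧ Relation.ReflTransGen so c e'
  so_sub_rb : ∀ e e', so e e' → rb e e'
  wr_sub_rb : ∀ x w r, w ∈ wrInv x r → rb w r
  rb_sub_ar : ∀ e e', rb e e' → ar e e'
  ar_dom : ∀ e e', ar e e' → e ∈ E ∧ e' ∈ E
  ar_irrefl : ∀ e, ¬ ar e e
  ar_trans : ∀ e₁ e₂ e₃, ar e₁ e₂ → ar e₂ e₃ → ar e₁ e₃
  ar_total : ∀ e ∈ E, ∀ e' ∈ E, e ≠ e' → ar e e' ∨ ar e' e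

/-! ## Relation expressions of visibility formulas -/

inductive RelExpr : Type
  | rid : RelExpr
  | rso : RelExpr
  | rwr : RelExpr
  | rrb : RelExpr
  | rar : RelExpr
  | runion : RelExpr → RelExpr → RelExpr
  | rcomp : RelExpr → RelExpr → RelExpr
  | rtc : RelExpr → RelExpr

/-- Semantics of a relation expression in an abstract execution. -/
def RelExpr.sem {Obj Val Rep Id : Type} (ξ : AExec Obj Val Rep Id) :
    RelExpr → Evt Obj Val Rep Id → Evt Obj Val Rep Id → Prop
  | .rid => Eq
  | .rso => ξ.so
  | .rwr => fun a b => ∃ x, a ∈ ξ.wrInv x b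
  | .rrb => ξ.rb
  | .rar => ξ.ar
  | .runion r s => fun a b => r.sem ξ a b ∨ s.sem ξ a b
  | .rcomp r s => fun a b => ∃ c, r.sem ξ a c ∧ s.sem ξ c b
  | .rtc r => Relation.TransGen (r.sem ξ)

/-- A relation expression is simple if it is one of `so`, `wr`, `rb`, `ar`. -/
def RelExpr.Simple : RelExpr → Prop
  | .rso => True
  | .rwr => True
  | .rrb => True
  | .rar => True
  | _ => False

/-- A relation expression is arbitration-free if `ar` does not occur in it. -/
def RelExpr.ArFree : RelExpr → Prop
  | .rid => True
  | .rso => True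
  | .rwr => True
  | .rrb => True
  | .rar => False
  | .runion r s => r.ArFree ∧ s.ArFree
  | .rcomp r s => r.ArFree ∧ s.ArFree
  | .rtc r => r.ArFree

/-! ## Basic visibility formulas and basic consistency models -/

/-- A basic visibility formula: a path of relation expressions. -/
structure BasicVis : Type where
  rels : List RelExpr

/-- `v.holds ξ x e₀ eₙ` : the basic visibility formula `v` relates `e₀` to `eₙ` on
object `x` in the abstract execution `ξ`. -/
def BasicVis.holds {Obj Val Rep Id : Type} (v : BasicVis) (ξ : AExec Obj Val Rep Id)
    (x : Obj) (e₀ eₙ : Evt Obj Val Rep Id) : Prop :=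
  ∃ es : ℕ → Evt Obj Val Rep Id,
    es 0 = e₀ ∧ es v.rels.length = eₙ ∧
    (∀ i, i ≤ v.rels.length → es i ∈ ξ.E) ∧
    (∀ (i : ℕ) (R : RelExpr), v.rels[i]? = some R → R.sem ξ (es i) (es (i + 1))) ∧
    (e₀.wval x).isSome ∧ ξ.wrInv x eₙ ≠ ∅

def BasicVis.SimpleForm (v : BasicVis) : Prop := ∀ r ∈ v.rels, r.Simple

def BasicVis.ArbFree (v : BasicVis) : Prop := ∀ r ∈ v.rels, r.ArFree

/-- The context (as a set of events) of event `r` for object `x`, determined by a set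
`F` of basic visibility formulas. -/
def bctxt {Obj Val Rep Id : Type} (F : Set BasicVis) (x : Obj) (ξ : AExec Obj Val Rep Id)
    (r : Evt Obj Val Rep Id) : Set (Evt Obj Val Rep Id) :=
  {e | e ∈ ξ.E ∧ ∃ v ∈ F, v.holds ξ x e r}

/-- A basic consistency model: a set of basic visibility formulas whose denotations
cover `so` and each `wr_x`. -/
structure BasicCMod (Obj Val Rep Id : Type) : Type where
  formulas : Set BasicVis
  covers_so : ∃ v ∈ formulas, ∀ (ξ : AExec Obj Val Rep Id) (x : Obj) e e',
    ξ.so e e' → (e.wval x).isSome → ξ.wrInv x e' ≠ ∅ → v.holds ξ x e e'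
  covers_wr : ∃ v ∈ formulas, ∀ (ξ : AExec Obj Val Rep Id) (x : Obj) e e',
    e ∈ ξ.wrInv x e' → (e.wval x).isSome → v.holds ξ x e e'

/-- `C₁` is weaker than `C₂` : the context of every event under `C₁` is contained in
its context under `C₂`, in every abstract execution. -/
def BWeaker {Obj Val Rep Id : Type} (C₁ C₂ : BasicCMod Obj Val Rep Id) : Prop :=
  ∀ (ξ : AExec Obj Val Rep Id) (x : Obj) (e : Evt Obj Val Rep Id),
    bctxt C₁.formulas x ξ e ⊆ bctxt C₂.formulas x ξ e

/-! ## Basic operation specifications -/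

structure BasicOpSpec (Obj Val Rep Id : Type) : Type where
  E : Set (Evt Obj Val Rep Id)
  /-- read predicate -/
  rspec : Evt Obj Val Rep Id → Prop
  /-- write specification: the (partial) map from read values to written values -/
  wspec : Evt Obj Val Rep Id → Option (Val → Option Val)

namespace BasicOpSpec

variable {Obj Val Rep Id : Type}

def IsRead (O : BasicOpSpec Obj Val Rep Id) (e : Evt Obj Val Rep Id) : Prop := O.rspec e

def IsWrite (O : BasicOpSpec Obj Val Rep Id) (e : Evt Obj Val Rep Id) : Prop :=
  (O.wspec e).isSome

def IsRW (O : BasicOpSpec Obj Val Rep Id) (e : Evt Obj Val Rep Id) : Prop :=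
  O.rspec e ∧ (O.wspec e).isSome

def IsCondRW (O : BasicOpSpec Obj Val Rep Id) (e : Evt Obj Val Rep Id) : Prop :=
  O.IsRW e ∧ ∃ f, O.wspec e = some f ∧ ∃ v, f v = none

/-- The operation-closure assumptions about basic operation specifications. -/
def WF (O : BasicOpSpec Obj Val Rep Id) : Prop :=
  -- initial events belong to the specification
  (∀ e : Evt Obj Val Rep Id, e.isInit = true → e ∈ O.E) ∧
  -- every (non-initial) event accesses a single object
  (∀ e ∈ O.E, e.isInit = false → ∃ x : Obj, e.obj = {x}) ∧
  -- at least one read and one write event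
  (∃ e ∈ O.E, O.IsRead e) ∧ (∃ e ∈ O.E, O.IsWrite e) ∧
  -- uniformity across replicas, identifiers and objects
  (∀ e ∈ O.E, e.isInit = false → ∀ (r : Rep) (i : Id) (x : Obj), ∃ e' ∈ O.E,
    e'.rep = r ∧ e'.ident = i ∧ e'.obj = {x} ∧ (O.rspec e' ↔ O.rspec e) ∧
    O.wspec e' = O.wspec e) ∧
  -- `wspec e`, when defined, is defined on at least one value
  (∀ e ∈ O.E, ∀ f, O.wspec e = some f → ∃ v, (f v).isSome) ∧
  -- a write which is not a read has a total constant write specification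
  (∀ e ∈ O.E, O.IsWrite e → ¬ O.IsRead e → ∃ f, O.wspec e = some f ∧ ∃ c, ∀ v, f v = some c) ∧
  -- every value enables some event to write
  (∀ v : Val, ∃ e ∈ O.E, ∃ f, O.wspec e = some f ∧ (f v).isSome) ∧
  -- if read-writes exist, every value enables some read-write
  ((∃ e ∈ O.E, O.IsRW e) →
    ∀ v : Val, ∃ e ∈ O.E, O.IsRW e ∧ ∃ f, O.wspec e = some f ∧ (f v).isSome) ∧
  -- if conditional read-writes exist, every value disables some conditional read-write
  ((∃ e ∈ O.E, O.IsCondRW e) →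
    ∀ v : Val, ∃ e ∈ O.E, O.IsCondRW e ∧ ∃ f, O.wspec e = some f ∧ f v = none)

end BasicOpSpec

/-! ## Validity w.r.t. basic storage specifications -/

/-- Validity of an abstract execution w.r.t. a basic storage specification, given by a
set `F` of basic visibility formulas and a basic operation specification `O`. -/
def BValid {Obj Val Rep Id : Type} (F : Set BasicVis) (O : BasicOpSpec Obj Val Rep Id)
    (ξ : AExec Obj Val Rep Id) : Prop :=
  ξ.E ⊆ O.E ∧
  ∀ e ∈ ξ.E, ∀ x : Obj,
    ((O.rspec e ∧ x ∈ e.obj) →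
      ∃ w ∈ bctxt F x ξ e,
        (∀ w' ∈ bctxt F x ξ e, w' ≠ w → ξ.ar w' w) ∧
        ξ.wrInv x e = {w} ∧
        e.wval x = (O.wspec e).bind (fun f => (w.wval x).bind f)) ∧
    (¬ (O.rspec e ∧ x ∈ e.obj) →
      ξ.wrInv x e = ∅ ∧ ∀ v : Val, e.wval x = (O.wspec e).bind (fun f => f v))

/-- A basic visibility formula `v` is vacuous w.r.t. `(F, O)`. -/
def BVacuous {Obj Val Rep Id : Type} (F : Set BasicVis) (O : BasicOpSpec Obj Val Rep Id)
    (v : BasicVis) : Prop :=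
  ∀ ξ : AExec Obj Val Rep Id, BValid F O ξ ↔ BValid (F \ {v}) O ξ

/-- A basic consistency model is in normal form w.r.t. `O` : all its formulas are
simple and none of them is vacuous. -/
def BInNormalForm {Obj Val Rep Id : Type} (O : BasicOpSpec Obj Val Rep Id)
    (N : BasicCMod Obj Val Rep Id) : Prop :=
  ∀ v ∈ N.formulas, v.SimpleForm ∧ ¬ BVacuous N.formulas O v

/-- `N` is a normal form of `C` w.r.t. `O`. -/
def BIsNormalFormOf {Obj Val Rep Id : Type} (O : BasicOpSpec Obj Val Rep Id)
    (C N : BasicCMod Obj Val Rep Id) : Prop :=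
  BInNormalForm O N ∧ ∀ ξ : AExec Obj Val Rep Id, BValid C.formulas O ξ ↔ BValid N.formulas O ξ

/-- A basic consistency model is arbitration-free w.r.t. `O` if some normal form of it
w.r.t. `O` consists of arbitration-free formulas. -/
def BArbFree {Obj Val Rep Id : Type} (C : BasicCMod Obj Val Rep Id)
    (O : BasicOpSpec Obj Val Rep Id) : Prop :=
  ∃ N : BasicCMod Obj Val Rep Id, BIsNormalFormOf O C N ∧ ∀ v ∈ N.formulas, v.ArbFree

/-! ## Causal consistency (basic version) -/

/-- The single visibility formula of causal consistency: `(e₀,e₁) ∈ rb⁺`,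
`e₀` writes `x` and `e₁` reads `x`. -/
def ccVis : BasicVis := { rels := [RelExpr.rtc RelExpr.rrb] }

theorem ccVis_holds {Obj Val Rep Id : Type} (ξ : AExec Obj Val Rep Id) (x : Obj)
    (e e' : Evt Obj Val Rep Id) (he : e ∈ ξ.E) (he' : e' ∈ ξ.E) (hrb : ξ.rb e e')
    (hw : (e.wval x).isSome) (hr : ξ.wrInv x e' ≠ ∅) :
    ccVis.holds ξ x e e' := by
  refine ⟨fun i => if i = 0 then e else e', if_pos rfl, ?_, ?_, ?_, hw, hr⟩
  · show (if (1 : ℕ) = 0 then e else e') = e'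
    simp
  · intro i _
    by_cases h : i = 0
    · simpa [h] using he
    · simpa [h] using he'
  · intro i R hR
    have hi : i = 0 ∧ R = RelExpr.rtc RelExpr.rrb := by
      cases i with
      | zero =>
        simp only [ccVis, List.getElem?_cons_zero, Option.some.injEq] at hR
        exact ⟨rfl, hR.symm⟩
      | succ n =>
        simp [ccVis] at hR
    obtain ⟨h0, hReq⟩ := hi
    subst h0; subst hReq
    simpa [RelExpr.sem] using Relation.TransGen.single hrb

/-- Causal consistency as a basic consistency model. -/
def CC (Obj Val Rep Id : Type) : BasicCMod Obj Val Rep Id where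
  formulas := {ccVis}
  covers_so := by
    refine ⟨ccVis, rfl, fun ξ x e e' hso hw hr => ?_⟩
    obtain ⟨he, he'⟩ := ξ.so_dom _ _ hso
    exact ccVis_holds ξ x e e' he he' (ξ.so_sub_rb _ _ hso) hw hr
  covers_wr := by
    refine ⟨ccVis, rfl, fun ξ x e e' hwr hw => ?_⟩
    have hne : ξ.wrInv x e' ≠ ∅ := by
      intro h; rw [h] at hwr; exact hwr
    exact ccVis_holds ξ x e e' (ξ.wr_dom _ _ _ hwr) (ξ.wr_reads_dom _ _ hne)
      (ξ.wr_sub_rb _ _ _ hwr) hw hne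

/-! ## Labelled transition systems, programs, storage implementations -/

structure LTS (S A : Type) : Type where
  start : S
  delta : S → A → Option S

def LTS.run {S A : Type} (L : LTS S A) : S → List A → Option S
  | s, [] => some s
  | s, a :: t =>
    match L.delta s a with
    | some s' => L.run s' t
    | none => none

def LTS.IsTrace {S A : Type} (L : LTS S A) (t : List A) : Prop :=
  (L.run L.start t).isSome

/-- An LTS is finite when it has no infinite execution. -/
def LTS.FiniteLTS {S A : Type} (L : LTS S A) : Prop :=
  ¬ ∃ f : ℕ → A, ∀ n : ℕ, L.IsTrace ((List.range n).map f)

/-- A program: an LTS whose actions include events, plus local actions, each action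
having a replica. -/
structure Program (Obj Val Rep Id : Type) : Type 1 where
  PState : Type
  PLoc : Type
  locRep : PLoc → Rep
  plts : LTS PState (Evt Obj Val Rep Id ⊕ PLoc)

/-- Actions of a storage implementation: synchronized actions pairing an event with its
write-read dependencies, send/receive actions carrying sets of events, and local
actions. -/
inductive IAct (Obj Val Rep Id Msg Loc : Type) : Type
  | sync (e : Evt Obj Val Rep Id) (m : Obj → Set (Evt Obj Val Rep Id))
  | send (r : Rep) (msg : Msg) (rcv : Set (Evt Obj Val Rep Id))
  | recv (r : Rep) (msg : Msg) (rcv : Set (Evt Obj Val Rep Id))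
  | loc (r : Rep) (a : Loc)

namespace IAct

variable {Obj Val Rep Id Msg Loc : Type}

def rep : IAct Obj Val Rep Id Msg Loc → Rep
  | .sync e _ => e.rep
  | .send r _ _ => r
  | .recv r _ _ => r
  | .loc r _ => r

def rcvSet : IAct Obj Val Rep Id Msg Loc → Set (Evt Obj Val Rep Id)
  | .send _ _ S => S
  | .recv _ _ S => S
  | _ => ∅

def IsRecv : IAct Obj Val Rep Id Msg Loc → Prop
  | .recv _ _ _ => True
  | _ => False

end IAct

/-- The list of events occurring in synchronized actions of a trace. -/
def syncEvents {Obj Val Rep Id Msg Loc : Type} (t : List (IAct Obj Val Rep Id Msg Loc)) :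
    List (Evt Obj Val Rep Id) :=
  t.filterMap (fun a => match a with | .sync e _ => some e | _ => none)

/-- Well-formedness of implementation traces: every event occurs in at most one
synchronized action, the events of the `rcvSet` of a send/receive action occur in
earlier actions, and every receive is matched by an earlier send carrying the same
message and the same set of events. -/
def TraceWF {Obj Val Rep Id Msg Loc : Type} (t : List (IAct Obj Val Rep Id Msg Loc)) :
    Prop :=
  (syncEvents t).Nodup ∧
  (∀ (i : ℕ) (a : IAct Obj Val Rep Id Msg Loc), t[i]? = some a →
    ∀ e ∈ a.rcvSet, ∃ j < i, ∃ m, t[j]? = some (IAct.sync e m)) ∧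
  (∀ (i : ℕ) (r : Rep) (μ : Msg) (S : Set (Evt Obj Val Rep Id)),
    t[i]? = some (IAct.recv r μ S) →
    ∃ j < i, ∃ r' : Rep, t[j]? = some (IAct.send r' μ S))

/-- A storage implementation. -/
structure Impl (Obj Val Rep Id : Type) : Type 1 where
  Msg : Type
  IState : Type
  ILoc : Type
  ilts : LTS IState (IAct Obj Val Rep Id Msg ILoc)
  wf : ∀ t, ilts.IsTrace t → TraceWF t

/-- Parallel composition of a program and a storage implementation: the implementation's
synchronized action `(e, m)` synchronizes with the program action `e`; all the other
actions interleave freely. -/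
def comp {Obj Val Rep Id : Type} (P : Program Obj Val Rep Id) (I : Impl Obj Val Rep Id) :
    LTS (P.PState × I.IState) (IAct Obj Val Rep Id I.Msg I.ILoc ⊕ P.PLoc) where
  start := (P.plts.start, I.ilts.start)
  delta := fun s a =>
    match a with
    | .inl (.sync e m) =>
      match P.plts.delta s.1 (.inl e), I.ilts.delta s.2 (.sync e m) with
      | some sp, some si => some (sp, si)
      | _, _ => none
    | .inl a' =>
      match I.ilts.delta s.2 a' with
      | some si => some (s.1, si)
      | none => none
    | .inr l =>
      match P.plts.delta s.1 (.inr l) with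
      | some sp => some (sp, s.2)
      | none => none

/-- Projection of a trace of the composition to a sequence of program actions. -/
def projP {Obj Val Rep Id : Type} (P : Program Obj Val Rep Id) (I : Impl Obj Val Rep Id)
    (t : List (IAct Obj Val Rep Id I.Msg I.ILoc ⊕ P.PLoc)) :
    List (Evt Obj Val Rep Id ⊕ P.PLoc) :=
  t.filterMap (fun a => match a with
    | .inl (.sync e _) => some (.inl e)
    | .inr l => some (.inr l)
    | _ => none)

/-- Replica of a program action. -/
def paRep {Obj Val Rep Id : Type} (P : Program Obj Val Rep Id) :
    (Evt Obj Val Rep Id ⊕ P.PLoc) → Rep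
  | .inl e => e.rep
  | .inr l => P.locRep l

/-- Replica of an action of the composition. -/
def caRep {Obj Val Rep Id : Type} (P : Program Obj Val Rep Id) (I : Impl Obj Val Rep Id) :
    (IAct Obj Val Rep Id I.Msg I.ILoc ⊕ P.PLoc) → Rep
  | .inl a => a.rep
  | .inr l => P.locRep l

/-- Replica `r` is waiting in the trace `t` of `P ∥ I` : the program can execute some
action at `r` after the projection of `t`, but every action of `r` enabled in `P ∥ I`
after `t` is a receive. -/
def Waiting {Obj Val Rep Id : Type} (P : Program Obj Val Rep Id) (I : Impl Obj Val Rep Id)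
    (t : List (IAct Obj Val Rep Id I.Msg I.ILoc ⊕ P.PLoc)) (r : Rep) : Prop :=
  (∃ (a : Evt Obj Val Rep Id ⊕ P.PLoc) (s : P.PState),
    paRep P a = r ∧ P.plts.run P.plts.start (projP P I t) = some s ∧
    (P.plts.delta s a).isSome) ∧
  (∀ (a : IAct Obj Val Rep Id I.Msg I.ILoc ⊕ P.PLoc) (s : P.PState × I.IState),
    caRep P I a = r → (comp P I).run (comp P I).start t = some s →
    ((comp P I).delta s a).isSome →
    match a with
    | .inl b => b.IsRecv
    | .inr _ => False)

/-- Availability of a storage implementation. -/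
def Impl.Available {Obj Val Rep Id : Type} (I : Impl Obj Val Rep Id) : Prop :=
  (∀ P : Program Obj Val Rep Id, P.plts.FiniteLTS → (comp P I).FiniteLTS) ∧
  (∀ P : Program Obj Val Rep Id, ∀ t, (comp P I).IsTrace t → ∀ r : Rep, ¬ Waiting P I t r)

/-! ## Induced histories and abstract executions of implementation traces -/

/-- `e` occurs (in a synchronized action) strictly before `e'` in the trace `t`. -/
def occursBefore {Obj Val Rep Id Msg Loc : Type} (t : List (IAct Obj Val Rep Id Msg Loc))
    (e e' : Evt Obj Val Rep Id) : Prop :=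
  ∃ i j : ℕ, i < j ∧ (∃ m, t[i]? = some (IAct.sync e m)) ∧ (∃ m, t[j]? = some (IAct.sync e' m))

/-- Session order induced by a trace (with a chosen initial event `ι`). -/
def inducedSo {Obj Val Rep Id Msg Loc : Type} (t : List (IAct Obj Val Rep Id Msg Loc))
    (ι : Evt Obj Val Rep Id) (e e' : Evt Obj Val Rep Id) : Prop :=
  (e = ι ∧ e' ≠ ι ∧ e' ∈ syncEvents t) ∨
  (e ∈ syncEvents t ∧ e' ∈ syncEvents t ∧ e.rep = e'.rep ∧ occursBefore t e e')

/-- Write-read dependencies induced by a trace. -/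
def inducedWr {Obj Val Rep Id Msg Loc : Type} (t : List (IAct Obj Val Rep Id Msg Loc))
    (x : Obj) (e : Evt Obj Val Rep Id) : Set (Evt Obj Val Rep Id) :=
  {w | ∃ (i : ℕ) (m : Obj → Set (Evt Obj Val Rep Id)), t[i]? = some (IAct.sync e m) ∧ w ∈ m x}

/-- Receive-before relation induced by a trace: the session order together with the
pairs `(e, e')` where `e` belongs to the `rcvSet` of a receive action at the replica of
`e'` occurring before (the synchronized action of) `e'`. -/
def inducedRb {Obj Val Rep Id Msg Loc : Type} (t : List (IAct Obj Val Rep Id Msg Loc))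
    (ι : Evt Obj Val Rep Id) (e e' : Evt Obj Val Rep Id) : Prop :=
  inducedSo t ι e e' ∨
  ∃ i j : ℕ, i < j ∧
    (∃ (μ : Msg) (S : Set (Evt Obj Val Rep Id)), t[i]? = some (IAct.recv e'.rep μ S) ∧ e ∈ S) ∧
    (∃ m, t[j]? = some (IAct.sync e' m))

/-- The abstract execution `ξ` is induced by the trace `t` : its history is the induced
history of `t`, its receive-before relation is the induced one, and its arbitration
order is any strict total order extending it (this is enforced by `AExec`). -/
def Induces {Obj Val Rep Id Msg Loc : Type} (t : List (IAct Obj Val Rep Id Msg Loc))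
    (ξ : AExec Obj Val Rep Id) : Prop :=
  ξ.init ∉ syncEvents t ∧
  ξ.E = insert ξ.init {e | e ∈ syncEvents t} ∧
  (∀ e e', ξ.so e e' ↔ inducedSo t ξ.init e e') ∧
  (∀ x e, ξ.wrInv x e = inducedWr t x e) ∧
  (∀ e e', ξ.rb e e' ↔ inducedRb t ξ.init e e')

/-- `I` is an implementation of a specification whose validity predicate is `Valid` :
every trace of `I` induces some abstract execution valid w.r.t. the specification. -/
def IsSpecImpl {Obj Val Rep Id : Type} (I : Impl Obj Val Rep Id)
    (Valid : AExec Obj Val Rep Id → Prop) : Prop :=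
  ∀ t, I.ilts.IsTrace t → ∃ ξ : AExec Obj Val Rep Id, Induces t ξ ∧ Valid ξ

/-! ## General visibility formulas (with conflict predicates) -/

/-- A visibility formula: a path of relation expressions together with a conjunction of
conflict predicates `conflict(E')` and `conflict_x(E')` over sets of its variables
(indices `0, …, rels.length`), with at least one conjunct `conflict_x(E')` containing
the first variable. -/
structure VisFormula : Type where
  rels : List RelExpr
  confl : Set (Finset ℕ)
  conflX : Set (Finset ℕ)
  confl_bdd : ∀ E' ∈ confl, ∀ i ∈ E', i ≤ rels.length
  conflX_bdd : ∀ E' ∈ conflX, ∀ i ∈ E', i ≤ rels.length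
  hasX0 : ∃ E' ∈ conflX, 0 ∈ E'

/-- `v.holdsOn ξ x es` : the visibility formula `v` holds in `ξ` at object `x` under
the instantiation `es` of its variables. -/
def VisFormula.holdsOn {Obj Val Rep Id : Type} (v : VisFormula) (ξ : AExec Obj Val Rep Id)
    (x : Obj) (es : ℕ → Evt Obj Val Rep Id) : Prop :=
  (∀ i, i ≤ v.rels.length → es i ∈ ξ.E) ∧
  (∀ (i : ℕ) (R : RelExpr), v.rels[i]? = some R → R.sem ξ (es i) (es (i + 1))) ∧
  ξ.wrInv x (es v.rels.length) ≠ ∅ ∧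
  (∀ E' ∈ v.confl, ∃ y : Obj, ∀ i ∈ E', ((es i).wval y).isSome) ∧
  (∀ E' ∈ v.conflX, ∀ i ∈ E', ((es i).wval x).isSome)

/-- `v.holds ξ x e₀ eₙ` : the visibility formula `v` relates `e₀` to `eₙ` on object
`x` in the abstract execution `ξ`. -/
def VisFormula.holds {Obj Val Rep Id : Type} (v : VisFormula) (ξ : AExec Obj Val Rep Id)
    (x : Obj) (e₀ eₙ : Evt Obj Val Rep Id) : Prop :=
  ∃ es : ℕ → Evt Obj Val Rep Id, es 0 = e₀ ∧ es v.rels.length = eₙ ∧ v.holdsOn ξ x es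

def VisFormula.SimpleForm (v : VisFormula) : Prop := ∀ r ∈ v.rels, r.Simple

def VisFormula.ArbFreeF (v : VisFormula) : Prop := ∀ r ∈ v.rels, r.ArFree

/-- The context (as a set of events) of event `r` for object `x` determined by a set
`F` of visibility formulas. -/
def gctxt {Obj Val Rep Id : Type} (F : Set VisFormula) (x : Obj) (ξ : AExec Obj Val Rep Id)
    (r : Evt Obj Val Rep Id) : Set (Evt Obj Val Rep Id) :=
  {e | e ∈ ξ.E ∧ ∃ v ∈ F, v.holds ξ x e r}

/-- A (general) consistency model: a set of visibility formulas whose denotations cover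
`so` and each `wr_x`. -/
structure CModG (Obj Val Rep Id : Type) : Type where
  formulas : Set VisFormula
  covers_so : ∃ v ∈ formulas, ∀ (ξ : AExec Obj Val Rep Id) (x : Obj) e e',
    ξ.so e e' → (e.wval x).isSome → ξ.wrInv x e' ≠ ∅ → v.holds ξ x e e'
  covers_wr : ∃ v ∈ formulas, ∀ (ξ : AExec Obj Val Rep Id) (x : Obj) e e',
    e ∈ ξ.wrInv x e' → (e.wval x).isSome → v.holds ξ x e e'

/-- `C₁` is weaker than `C₂`. -/
def GWeaker {Obj Val Rep Id : Type} (C₁ C₂ : CModG Obj Val Rep Id) : Prop :=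
  ∀ (ξ : AExec Obj Val Rep Id) (x : Obj) (e : Evt Obj Val Rep Id),
    gctxt C₁.formulas x ξ e ⊆ gctxt C₂.formulas x ξ e

/-! ## Contexts and general operation specifications -/

/-- A context: a finite set of events together with an asymmetric irreflexive
receive-before relation and a strict total arbitration order containing it. -/
structure Ctxt (Obj Val Rep Id : Type) : Type where
  E : Set (Evt Obj Val Rep Id)
  finE : E.Finite
  rb : Evt Obj Val Rep Id → Evt Obj Val Rep Id → Prop
  ar : Evt Obj Val Rep Id → Evt Obj Val Rep Id → Prop
  rb_dom : ∀ e e', rb e e' → e ∈ E ∧ e' ∈ E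
  rb_irrefl : ∀ e, ¬ rb e e
  rb_asymm : ∀ e e', rb e e' → ¬ rb e' e
  ar_dom : ∀ e e', ar e e' → e ∈ E ∧ e' ∈ E
  ar_irrefl : ∀ e, ¬ ar e e
  ar_trans : ∀ e₁ e₂ e₃, ar e₁ e₂ → ar e₂ e₃ → ar e₁ e₃
  ar_total : ∀ e ∈ E, ∀ e' ∈ E, e ≠ e' → ar e e' ∨ ar e' e
  rb_sub_ar : ∀ e e', rb e e' → ar e e'

/-- A (general) operation specification: events together with read, extract and write
specifications. -/
structure OpSpecG (Obj Val Rep Id : Type) : Type where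
  E : Set (Evt Obj Val Rep Id)
  rspec : Evt Obj Val Rep Id → Obj → Ctxt Obj Val Rep Id → Set (Evt Obj Val Rep Id)
  extract : Evt Obj Val Rep Id → Obj → Set (Evt Obj Val Rep Id × Val) → Option Val
  wspec : Evt Obj Val Rep Id → Obj → Val → Option Val
  rspec_wf : ∀ e x c, rspec e x c ⊆ c.E
  rspec_init : ∀ e : Evt Obj Val Rep Id, e.isInit = true → ∀ x c, rspec e x c = ∅
  rspec_uncond : ∀ e x, (∃ c, rspec e x c ≠ ∅) → ∀ c' : Ctxt Obj Val Rep Id,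
    c'.E ≠ ∅ → rspec e x c' ≠ ∅
  extract_init : ∀ e : Evt Obj Val Rep Id, e.isInit = true → ∀ x R, (extract e x R).isSome
  wspec_init : ∀ e : Evt Obj Val Rep Id, e.isInit = true → ∀ x u, (wspec e x u).isSome

/-- The context of `r` at `x` in `ξ` under the formulas `F`, as a `Ctxt`. -/
def execCtxt {Obj Val Rep Id : Type} (F : Set VisFormula) (x : Obj)
    (ξ : AExec Obj Val Rep Id) (r : Evt Obj Val Rep Id) : Ctxt Obj Val Rep Id where
  E := gctxt F x ξ r
  finE := ξ.finE.subset (fun _ he => he.1)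
  rb := fun a b => a ∈ gctxt F x ξ r ∧ b ∈ gctxt F x ξ r ∧ ξ.rb a b
  ar := fun a b => a ∈ gctxt F x ξ r ∧ b ∈ gctxt F x ξ r ∧ ξ.ar a b
  rb_dom := fun _ _ h => ⟨h.1, h.2.1⟩
  rb_irrefl := fun e h => ξ.rb_irrefl e h.2.2
  rb_asymm := fun _ _ h h' => ξ.rb_asymm _ _ h.2.2 h'.2.2
  ar_dom := fun _ _ h => ⟨h.1, h.2.1⟩
  ar_irrefl := fun e h => ξ.ar_irrefl e h.2.2
  ar_trans := fun _ _ _ h₁ h₂ => ⟨h₁.1, h₂.2.1, ξ.ar_trans _ _ _ h₁.2.2 h₂.2.2⟩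
  ar_total := fun e he e' he' hne =>
    (ξ.ar_total e he.1 e' he'.1 hne).imp (fun h => ⟨he, he', h⟩) (fun h => ⟨he', he, h⟩)
  rb_sub_ar := fun _ _ h => ⟨h.1, h.2.1, ξ.rb_sub_ar _ _ h.2.2⟩

/-- `rspec_{F,x}(ξ,e)`. -/
def rspecD {Obj Val Rep Id : Type} (F : Set VisFormula) (O : OpSpecG Obj Val Rep Id)
    (x : Obj) (ξ : AExec Obj Val Rep Id) (e : Evt Obj Val Rep Id) :
    Set (Evt Obj Val Rep Id) :=
  O.rspec e x (execCtxt F x ξ e)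

/-- `extract_{F,x}(ξ,e)`. -/
def extractD {Obj Val Rep Id : Type} (F : Set VisFormula) (O : OpSpecG Obj Val Rep Id)
    (x : Obj) (ξ : AExec Obj Val Rep Id) (e : Evt Obj Val Rep Id) : Option Val :=
  O.extract e x {p | p.1 ∈ rspecD F O x ξ e ∧ p.1.wval x = some p.2}

/-- `wspec_{F,x}(ξ,e)`. -/
def wspecD {Obj Val Rep Id : Type} (F : Set VisFormula) (O : OpSpecG Obj Val Rep Id)
    (x : Obj) (ξ : AExec Obj Val Rep Id) (e : Evt Obj Val Rep Id) : Option Val :=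
  (extractD F O x ξ e).bind (fun u => O.wspec e x u)

/-- Validity of an abstract execution w.r.t. a general storage specification. -/
def GValid {Obj Val Rep Id : Type} (F : Set VisFormula) (O : OpSpecG Obj Val Rep Id)
    (ξ : AExec Obj Val Rep Id) : Prop :=
  ξ.E ⊆ O.E ∧
  ∀ e ∈ ξ.E, ∀ x : Obj,
    ξ.wrInv x e = rspecD F O x ξ e ∧ e.wval x = wspecD F O x ξ e

/-! ## Maximally layered read specifications -/

/-- `l` is a chain (w.r.t. the strict order `lt`) inside `S` starting at `a` and ending
at a maximal element of `S`. -/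
def IsUpChain {α : Type} (lt : α → α → Prop) (S : Set α) (a : α) (l : List α) : Prop :=
  l ≠ [] ∧ l.head? = some a ∧ (∀ b ∈ l, b ∈ S) ∧ l.Chain' lt ∧
  (∀ b, l.getLast? = some b → ∀ c ∈ S, ¬ lt b c)

/-- `B` is the `k`-maximally layered subset of `S` w.r.t. `lt` : exactly the elements
of layer at most `k`, the layer of `a` being the size of the largest chain containing
`a` and a maximal element but no element below `a`. -/
def MaxLayered {α : Type} (lt : α → α → Prop) (S B : Set α) (k : ℕ) : Prop :=
  B = {a ∈ S | ∀ l, IsUpChain lt S a l → l.length ≤ k}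

namespace OpSpecG

variable {Obj Val Rep Id : Type}

/-- The read specification is `k`-maximally layered w.r.t. `ar`. -/
def MLayeredAr (O : OpSpecG Obj Val Rep Id) (k : ℕ) : Prop :=
  ∀ e x c, O.rspec e x c = ∅ ∨ MaxLayered c.ar c.E (O.rspec e x c) k

/-- The read specification is `k`-maximally layered w.r.t. `rb⁺`. -/
def MLayeredRb (O : OpSpecG Obj Val Rep Id) (k : ℕ) : Prop :=
  ∀ e x c, O.rspec e x c = ∅ ∨ MaxLayered (Relation.TransGen c.rb) c.E (O.rspec e x c) k

/-- The read specification is `∞`-maximally layered. -/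
def MLayeredInf (O : OpSpecG Obj Val Rep Id) : Prop :=
  ∀ e x c, O.rspec e x c = ∅ ∨ O.rspec e x c = c.E

/-- A maximally layered operation specification. -/
def MaximallyLayered (O : OpSpecG Obj Val Rep Id) : Prop :=
  (∃ k : ℕ, O.MLayeredAr k) ∨ (∃ k : ℕ, O.MLayeredRb k) ∨ O.MLayeredInf

/-- `e` is a read event of `O`. -/
def IsRead (O : OpSpecG Obj Val Rep Id) (e : Evt Obj Val Rep Id) : Prop :=
  ∃ x c, O.rspec e x c ≠ ∅

/-- `e` is a write event of `O`. -/
def IsWrite (O : OpSpecG Obj Val Rep Id) (e : Evt Obj Val Rep Id) : Prop :=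
  ∃ x u, (O.wspec e x u).isSome

def IsRW (O : OpSpecG Obj Val Rep Id) (e : Evt Obj Val Rep Id) : Prop :=
  O.IsRead e ∧ O.IsWrite e

/-- A conditional read-write event: a read event whose write specification is defined
for some arguments and undefined for others. -/
def IsCondRW (O : OpSpecG Obj Val Rep Id) (e : Evt Obj Val Rep Id) : Prop :=
  O.IsRead e ∧ (∃ x u, (O.wspec e x u).isSome) ∧ (∃ x u, O.wspec e x u = none)

/-- `D` is a domain of `O`. -/
def IsDomain (O : OpSpecG Obj Val Rep Id) (D : Set Obj) : Prop :=
  ∃ e ∈ O.E, e.isInit = false ∧ e.obj = D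

/-- The operation-closure assumptions about general operation specifications. -/
def ClosureWF (O : OpSpecG Obj Val Rep Id) : Prop :=
  -- initial events belong to the specification
  (∀ e : Evt Obj Val Rep Id, e.isInit = true → e ∈ O.E) ∧
  -- non-initial events access a finite set of objects
  (∀ e ∈ O.E, e.isInit = false → e.obj.Finite) ∧
  -- at least one read and one write event
  (∃ e ∈ O.E, O.IsRead e) ∧ (∃ e ∈ O.E, O.IsWrite e) ∧
  -- uniformity of operations across replicas and identifiers
  (∀ e ∈ O.E, e.isInit = false → ∀ (r : Rep) (i : Id), ∃ e' ∈ O.E,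
    e'.rep = r ∧ e'.ident = i ∧ e'.obj = e.obj ∧
    O.rspec e' = O.rspec e ∧ O.extract e' = O.extract e ∧ O.wspec e' = O.wspec e) ∧
  -- symmetric domains
  (∀ D : Set Obj, O.IsDomain D → ∀ x ∈ D, ∀ y, y ∉ D → O.IsDomain ((D \ {x}) ∪ {y})) ∧
  -- single-object read/write/read-write events exist for each object when they exist
  ((∃ e ∈ O.E, O.IsRead e ∧ ∃ x : Obj, e.obj = {x}) →
    ∀ x : Obj, ∃ e ∈ O.E, O.IsRead e ∧ e.obj = {x}) ∧
  ((∃ e ∈ O.E, O.IsWrite e ∧ ∃ x : Obj, e.obj = {x}) →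
    ∀ x : Obj, ∃ e ∈ O.E, O.IsWrite e ∧ e.obj = {x}) ∧
  ((∃ e ∈ O.E, O.IsRW e ∧ ∃ x : Obj, e.obj = {x}) →
    ∀ x : Obj, ∃ e ∈ O.E, O.IsRW e ∧ e.obj = {x}) ∧
  -- multi-object read/write/read-write events exist for every nonempty finite domain
  -- when some multi-object event of that kind exists
  ((∃ e ∈ O.E, O.IsRead e ∧ e.obj.Finite ∧ 2 ≤ e.obj.ncard) →
    ∀ D : Set Obj, D.Finite → D.Nonempty → ∃ e ∈ O.E, O.IsRead e ∧ e.obj = D) ∧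
  ((∃ e ∈ O.E, O.IsWrite e ∧ e.obj.Finite ∧ 2 ≤ e.obj.ncard) →
    ∀ D : Set Obj, D.Finite → D.Nonempty → ∃ e ∈ O.E, O.IsWrite e ∧ e.obj = D) ∧
  ((∃ e ∈ O.E, O.IsRW e ∧ e.obj.Finite ∧ 2 ≤ e.obj.ncard) →
    ∀ D : Set Obj, D.Finite → D.Nonempty → ∃ e ∈ O.E, O.IsRW e ∧ e.obj = D)

end OpSpecG

/-! ## Equivalence, vacuity, conflict-maximality, normal forms (general case) -/

/-- `F₁` and `F₂` are `O`-equivalent: exactly the same abstract executions over events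
of `O` are valid w.r.t. each. -/
def GEquiv {Obj Val Rep Id : Type} (O : OpSpecG Obj Val Rep Id)
    (F₁ F₂ : Set VisFormula) : Prop :=
  ∀ ξ : AExec Obj Val Rep Id, GValid F₁ O ξ ↔ GValid F₂ O ξ

/-- A visibility formula `v` is vacuous w.r.t. `(F, O)`. -/
def GVacuous {Obj Val Rep Id : Type} (F : Set VisFormula) (O : OpSpecG Obj Val Rep Id)
    (v : VisFormula) : Prop :=
  ∀ ξ : AExec Obj Val Rep Id, GValid F O ξ ↔ GValid (F \ {v}) O ξ

/-- `v'` is a conflict-strengthening of `v` : it replaces an occurrence of a conflict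
predicate by the same predicate over a strict superset, or removes a conjunct
`conflict(E')` when `conflict_x(E')` also occurs in `v`. -/
def Strengthening (v v' : VisFormula) : Prop :=
  v'.rels = v.rels ∧
  ((∃ E₁ E₂ : Finset ℕ, E₁ ∈ v.confl ∧ E₁ ⊂ E₂ ∧
      v'.confl = insert E₂ (v.confl \ {E₁}) ∧ v'.conflX = v.conflX) ∨
   (∃ E₁ E₂ : Finset ℕ, E₁ ∈ v.conflX ∧ E₁ ⊂ E₂ ∧
      v'.conflX = insert E₂ (v.conflX \ {E₁}) ∧ v'.confl = v.confl) ∨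
   (∃ E₁ : Finset ℕ, E₁ ∈ v.confl ∧ E₁ ∈ v.conflX ∧
      v'.confl = v.confl \ {E₁} ∧ v'.conflX = v.conflX))

/-- `v` is conflict-maximal w.r.t. `O` : no conflict-strengthening of `v` holds on all
instantiations of `v` in executions over events of `O`. -/
def ConflMaximal {Obj Val Rep Id : Type} (O : OpSpecG Obj Val Rep Id)
    (v : VisFormula) : Prop :=
  ¬ ∃ v' : VisFormula, Strengthening v v' ∧
    ∀ (ξ : AExec Obj Val Rep Id), ξ.E ⊆ O.E → ∀ (x : Obj) (es : ℕ → Evt Obj Val Rep Id),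
      v.holdsOn ξ x es → v'.holdsOn ξ x es

/-- A set of visibility formulas is in normal form w.r.t. `O` : all formulas are
simple and conflict-maximal, and none is vacuous. -/
def GInNormalForm {Obj Val Rep Id : Type} (O : OpSpecG Obj Val Rep Id)
    (F : Set VisFormula) : Prop :=
  ∀ v ∈ F, v.SimpleForm ∧ ConflMaximal O v ∧ ¬ GVacuous F O v

/-- A (general) consistency model is arbitration-free w.r.t. `O` if some `O`-equivalent
consistency model in normal form w.r.t. `O` consists of arbitration-free formulas. -/
def GArbFree {Obj Val Rep Id : Type} (C : CModG Obj Val Rep Id)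
    (O : OpSpecG Obj Val Rep Id) : Prop :=
  ∃ N : CModG Obj Val Rep Id, GInNormalForm O N.formulas ∧
    GEquiv O C.formulas N.formulas ∧ ∀ v ∈ N.formulas, v.ArbFreeF

/-! ## Causal suffixes -/

/-- The `ε_k`-suffix of a visibility formula `v` (for `k` in the union of its
`conflict_x`-sets): keeps the relations after position `k`, and intersects all
conflict predicates with the suffix variables. -/
def suffixAt (v : VisFormula) (k : ℕ) (hk : ∃ E' ∈ v.conflX, k ∈ E') : VisFormula where
  rels := v.rels.drop k
  confl :=
    (fun E' : Finset ℕ => (E'.filter (fun i => k ≤ i)).image (fun i => i - k)) '' v.confl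
  conflX :=
    (fun E' : Finset ℕ => (E'.filter (fun i => k ≤ i)).image (fun i => i - k)) '' v.conflX
  confl_bdd := by
    rintro E'' ⟨E', hE', rfl⟩ i hi
    simp only [Finset.mem_image, Finset.mem_filter] at hi
    obtain ⟨j, ⟨hj, hkj⟩, rfl⟩ := hi
    have hjb := v.confl_bdd E' hE' j hj
    simp only [List.length_drop]
    omega
  conflX_bdd := by
    rintro E'' ⟨E', hE', rfl⟩ i hi
    simp only [Finset.mem_image, Finset.mem_filter] at hi
    obtain ⟨j, ⟨hj, hkj⟩, rfl⟩ := hi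
    have hjb := v.conflX_bdd E' hE' j hj
    simp only [List.length_drop]
    omega
  hasX0 := by
    obtain ⟨E', hE', hkE'⟩ := hk
    refine ⟨_, ⟨E', hE', rfl⟩, ?_⟩
    simp only [Finset.mem_image, Finset.mem_filter]
    exact ⟨k, ⟨hkE', le_refl k⟩, Nat.sub_self k⟩

/-- Strength order on relation expressions: `rb` is stronger than `so` and `wr`, and
`ar` is stronger than `rb`, `so`, `wr`; extended compositionally. `RelLE r s` means
`s` is stronger than or equal to `r`. -/
inductive RelLE : RelExpr → RelExpr → Prop
  | refl (r : RelExpr) : RelLE r r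
  | so_rb : RelLE .rso .rrb
  | wr_rb : RelLE .rwr .rrb
  | so_ar : RelLE .rso .rar
  | wr_ar : RelLE .rwr .rar
  | rb_ar : RelLE .rrb .rar
  | runion {a b c d : RelExpr} : RelLE a c → RelLE b d → RelLE (.runion a b) (.runion c d)
  | rcomp {a b c d : RelExpr} : RelLE a c → RelLE b d → RelLE (.rcomp a b) (.rcomp c d)
  | rtc {a b : RelExpr} : RelLE a b → RelLE (.rtc a) (.rtc b)

/-- `v'` subsumes `v` : same length and each relation of `v'` is stronger than or equal
to the corresponding relation of `v`. -/
def Subsumes (v' v : VisFormula) : Prop :=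
  v'.rels.length = v.rels.length ∧
  ∀ (i : ℕ) (R R' : RelExpr), v.rels[i]? = some R → v'.rels[i]? = some R' → RelLE R R'

/-- A set of visibility formulas is closed under causal suffixes: for every formula
`v` and every `ε_k` in a `conflict_x`-set of `v` whose suffix is arbitration-free,
the set contains a formula subsuming that suffix. -/
def ClosedCausalSuffix (F : Set VisFormula) : Prop :=
  ∀ v ∈ F, ∀ (k : ℕ) (hk : ∃ E' ∈ v.conflX, k ∈ E'),
    (suffixAt v k hk).ArbFreeF → ∃ v' ∈ F, Subsumes v' (suffixAt v k hk)

/-! ## Corrections and execution-correctors -/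

/-- `ξ'` is the correction of `ξ` inserting the fresh event `a` as the immediate
receive-before and arbitration predecessor of `e` (and immediate session-order
predecessor of `e` when they are on the same replica), leaving the write-read
dependencies of the existing events unchanged. -/
structure IsCorrection {Obj Val Rep Id : Type} (ξ : AExec Obj Val Rep Id)
    (a e : Evt Obj Val Rep Id) (ξ' : AExec Obj Val Rep Id) : Prop where
  a_notin : a ∉ ξ.E
  e_mem : e ∈ ξ.E
  E_eq : ξ'.E = insert a ξ.E
  so_old : ∀ e₁ e₂, e₁ ∈ ξ.E → e₂ ∈ ξ.E → (ξ'.so e₁ e₂ ↔ ξ.so e₁ e₂)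
  ar_old : ∀ e₁ e₂, e₁ ∈ ξ.E → e₂ ∈ ξ.E → (ξ'.ar e₁ e₂ ↔ ξ.ar e₁ e₂)
  rb_old : ∀ e₁ e₂, e₁ ∈ ξ.E → e₂ ∈ ξ.E → (ξ'.rb e₁ e₂ ↔ ξ.rb e₁ e₂)
  wr_old : ∀ x e₁, e₁ ∈ ξ.E → ξ'.wrInv x e₁ = ξ.wrInv x e₁
  rb_a_e : ξ'.rb a e
  ar_below : ∀ b ∈ ξ.E, (ξ'.ar b a ↔ ξ.ar b e)
  ar_above : ∀ b ∈ ξ.E, (ξ'.ar a b ↔ (b = e ∨ ξ.ar e b))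
  so_same_rep : a.rep = e.rep →
    (∀ b ∈ ξ.E, (ξ'.so b a ↔ ξ.so b e)) ∧ (∀ b ∈ ξ.E, (ξ'.so a b ↔ (b = e ∨ ξ.so e b)))

/-- Correction of `ξ` with a sequence of fresh events (inserted, in order, immediately
before `e`). -/
inductive IsCorrectionSeq {Obj Val Rep Id : Type} (e : Evt Obj Val Rep Id) :
    AExec Obj Val Rep Id → List (Evt Obj Val Rep Id) → AExec Obj Val Rep Id → Prop
  | nil (ξ : AExec Obj Val Rep Id) : IsCorrectionSeq e ξ [] ξ
  | cons {ξ ξ₁ ξ₂ : AExec Obj Val Rep Id} {a : Evt Obj Val Rep Id}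
      {l : List (Evt Obj Val Rep Id)} :
      IsCorrection ξ a e ξ₁ → IsCorrectionSeq e ξ₁ l ξ₂ → IsCorrectionSeq e ξ (a :: l) ξ₂

/-- `ξ'` is `ξ ⊕ e` : `e` appended as the `ar`-maximal event. -/
structure IsAppend {Obj Val Rep Id : Type} (ξ : AExec Obj Val Rep Id)
    (e : Evt Obj Val Rep Id) (ξ' : AExec Obj Val Rep Id) : Prop where
  e_notin : e ∉ ξ.E
  E_eq : ξ'.E = insert e ξ.E
  so_old : ∀ e₁ e₂, e₁ ∈ ξ.E → e₂ ∈ ξ.E → (ξ'.so e₁ e₂ ↔ ξ.so e₁ e₂)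
  ar_old : ∀ e₁ e₂, e₁ ∈ ξ.E → e₂ ∈ ξ.E → (ξ'.ar e₁ e₂ ↔ ξ.ar e₁ e₂)
  rb_old : ∀ e₁ e₂, e₁ ∈ ξ.E → e₂ ∈ ξ.E → (ξ'.rb e₁ e₂ ↔ ξ.rb e₁ e₂)
  wr_old : ∀ x e₁, e₁ ∈ ξ.E → ξ'.wrInv x e₁ = ξ.wrInv x e₁
  ar_max : ∀ b ∈ ξ.E, ξ'.ar b e

/-- `ξ'` is `ξ` with the event `e` removed. -/
structure IsRemove {Obj Val Rep Id : Type} (ξ : AExec Obj Val Rep Id)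
    (e : Evt Obj Val Rep Id) (ξ' : AExec Obj Val Rep Id) : Prop where
  E_eq : ξ'.E = ξ.E \ {e}
  so_eq : ∀ e₁ e₂, e₁ ∈ ξ'.E → e₂ ∈ ξ'.E → (ξ'.so e₁ e₂ ↔ ξ.so e₁ e₂)
  ar_eq : ∀ e₁ e₂, e₁ ∈ ξ'.E → e₂ ∈ ξ'.E → (ξ'.ar e₁ e₂ ↔ ξ.ar e₁ e₂)
  rb_eq : ∀ e₁ e₂, e₁ ∈ ξ'.E → e₂ ∈ ξ'.E → (ξ'.rb e₁ e₂ ↔ ξ.rb e₁ e₂)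
  wr_eq : ∀ x e₁, e₁ ∈ ξ'.E → ξ'.wrInv x e₁ = ξ.wrInv x e₁

/-- `l` lists the values of the partial map `a` in increasing order of their
arguments. -/
def IsSeqOf {Obj Val Rep Id : Type} [LinearOrder Obj]
    (a : Obj → Option (Evt Obj Val Rep Id)) (l : List (Evt Obj Val Rep Id)) : Prop :=
  ∃ keys : List Obj, keys.Pairwise (· < ·) ∧ (∀ y, y ∈ keys ↔ (a y).isSome) ∧
    l = keys.filterMap a

/-- `a` is an execution-corrector for `(e, W, x, ξ)` w.r.t. the storage specification
`(F, O)`. -/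
def IsExecCorrector {Obj Val Rep Id : Type} [LinearOrder Obj] (F : Set VisFormula)
    (O : OpSpecG Obj Val Rep Id) (e : Evt Obj Val Rep Id) (W : Set Obj) (x : Obj)
    (ξ : AExec Obj Val Rep Id) (a : Obj → Option (Evt Obj Val Rep Id)) : Prop :=
  -- `a` is a partial map on `obj(e) ∖ {x}`
  (∀ y ey, a y = some ey → y ∈ e.obj ∧ y ≠ x) ∧
  -- (1) each corrector event writes exactly its assigned object, whenever the
  -- correction up to it (with `e` removed) is valid
  (∀ y ey, a y = some ey →
    ∀ l, IsSeqOf (fun z => if z ≤ y then a z else none) l →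
    ∀ ξ₁ ξ₂ : AExec Obj Val Rep Id, IsCorrectionSeq e ξ l ξ₁ → IsRemove ξ₁ e ξ₂ →
      GValid F O ξ₂ → ∀ z : Obj, ((wspecD F O z ξ₂ ey).isSome ↔ z = y)) ∧
  -- (2) in the (valid) full correction, `e` reads every object of its domain, and
  -- writes exactly the objects of `W`
  (∀ y ∈ e.obj, ∀ l, IsSeqOf a l → ∀ ξ' : AExec Obj Val Rep Id,
    IsCorrectionSeq e ξ l ξ' → GValid F O ξ' →
      (rspecD F O y ξ' e ≠ ∅ ∧ ((wspecD F O y ξ' e).isSome ↔ y ∈ W)))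

/-- The corrector assumption for the storage specification `(F, O)`. -/
def CorrectorAssumption {Obj Val Rep Id : Type} [LinearOrder Obj] (F : Set VisFormula)
    (O : OpSpecG Obj Val Rep Id) : Prop :=
  (∃ e ∈ O.E, O.IsCondRW e) →
  ∀ D : Set Obj, O.IsDomain D → ∀ W ⊆ D, ∀ x ∈ D, (W.Nonempty → x ∈ W) →
    ∀ ξ : AExec Obj Val Rep Id, ∃ e ∈ O.E, O.IsCondRW e ∧ e ∉ ξ.E ∧ e.obj = D ∧
      ∀ ξ' : AExec Obj Val Rep Id, IsAppend ξ e ξ' →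
        ∃ a : Obj → Option (Evt Obj Val Rep Id), IsExecCorrector F O e W x ξ' a

/-! ## Causal consistency (general version) -/

/-- The single visibility formula of causal consistency, as a general visibility
formula. -/
def ccVisG : VisFormula where
  rels := [RelExpr.rtc RelExpr.rrb]
  confl := ∅
  conflX := {{0}}
  confl_bdd := by intro E' hE'; exact absurd hE' (Set.notMem_empty E')
  conflX_bdd := by
    intro E' hE' i hi
    simp only [Set.mem_singleton_iff] at hE'
    subst hE'
    simp only [Finset.mem_singleton] at hi
    subst hi
    exact Nat.zero_le _
  hasX0 := ⟨{0}, rfl, Finset.mem_singleton_self 0⟩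

theorem ccVisG_holds {Obj Val Rep Id : Type} (ξ : AExec Obj Val Rep Id) (x : Obj)
    (e e' : Evt Obj Val Rep Id) (he : e ∈ ξ.E) (he' : e' ∈ ξ.E) (hrb : ξ.rb e e')
    (hw : (e.wval x).isSome) (hr : ξ.wrInv x e' ≠ ∅) :
    ccVisG.holds ξ x e e' := by
  refine ⟨fun i => if i = 0 then e else e', if_pos rfl, ?_, ?_, ?_, ?_, ?_, ?_⟩
  · show (if (1 : ℕ) = 0 then e else e') = e'
    simp
  · intro i _
    by_cases h : i = 0
    · simpa [h] using he
    · simpa [h] using he'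
  · intro i R hR
    have hi : i = 0 ∧ R = RelExpr.rtc RelExpr.rrb := by
      cases i with
      | zero =>
        simp only [ccVisG, List.getElem?_cons_zero, Option.some.injEq] at hR
        exact ⟨rfl, hR.symm⟩
      | succ n =>
        simp [ccVisG] at hR
    obtain ⟨h0, hReq⟩ := hi
    subst h0; subst hReq
    simpa [RelExpr.sem] using Relation.TransGen.single hrb
  · show ξ.wrInv x (if (1:ℕ) = 0 then e else e') ≠ ∅
    simpa using hr
  · intro E' hE'
    exact absurd hE' (Set.notMem_empty E')
  · intro E' hE' i hi
    simp only [ccVisG, Set.mem_singleton_iff] at hE'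
    subst hE'
    simp only [Finset.mem_singleton] at hi
    subst hi
    simpa using hw

/-- Causal consistency as a general consistency model. -/
def CCG (Obj Val Rep Id : Type) : CModG Obj Val Rep Id where
  formulas := {ccVisG}
  covers_so := by
    refine ⟨ccVisG, rfl, fun ξ x e e' hso hw hr => ?_⟩
    obtain ⟨he, he'⟩ := ξ.so_dom _ _ hso
    exact ccVisG_holds ξ x e e' he he' (ξ.so_sub_rb _ _ hso) hw hr
  covers_wr := by
    refine ⟨ccVisG, rfl, fun ξ x e e' hwr hw => ?_⟩
    have hne : ξ.wrInv x e' ≠ ∅ := by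
      intro h; rw [h] at hwr; exact hwr
    exact ccVisG_holds ξ x e e' (ξ.wr_dom _ _ _ hwr) (ξ.wr_reads_dom _ _ hne)
      (ξ.wr_sub_rb _ _ _ hwr) hw hne


/-- Let `OpSpec` be a basic operation specification and `CMod₁ ≼ CMod₂` basic
consistency models.  Every abstract execution valid w.r.t. `(CMod₂, OpSpec)` is also
valid w.r.t. `(CMod₁, OpSpec)`. -/
theorem valid_of_weaker_basic
    {Obj Val Rep Id : Type} [Infinite Obj] [Infinite Val]
    (OpSpec : BasicOpSpec Obj Val Rep Id) (hwf : OpSpec.WF)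
    (CMod₁ CMod₂ : BasicCMod Obj Val Rep Id) (h : BWeaker CMod₁ CMod₂)
    (ξ : AExec Obj Val Rep Id) (hv : BValid CMod₂.formulas OpSpec ξ) :
    BValid CMod₁.formulas OpSpec ξ := by
  obtain ⟨hE, hval⟩ := hv
  refine ⟨hE, fun e he x => ?_⟩
  obtain ⟨hread, hnread⟩ := hval e he x
  refine ⟨fun hrx => ?_, hnread⟩
  obtain ⟨w, hw₂, hmax₂, hwr, hwv⟩ := hread hrx
  -- `w` is read by `e` on `x`
  have hwmem : w ∈ ξ.wrInv x e := by rw [hwr]; rfl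
  -- from membership in ctxt₂, `w` writes `x`
  have hwE : w ∈ ξ.E := hw₂.1
  obtain ⟨v₂, _, es, _, _, _, _, hwvx, _⟩ := hw₂.2
  -- covers_wr of CMod₁ puts `w` in ctxt₁
  obtain ⟨v₁, hv₁F, hv₁⟩ := CMod₁.covers_wr
  have hw₁ : w ∈ bctxt CMod₁.formulas x ξ e :=
    ⟨hwE, v₁, hv₁F, hv₁ ξ x w e hwmem hwvx⟩
  refine ⟨w, hw₁, fun w' hw' hne => ?_, hwr, hwv⟩
  exact hmax₂ w' (h ξ x e hw') hne

end AFC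
end

section
/- For every consistency model CMod there exists a consistency model CMod' in simple form (all of its visibility formulas simple, i.e. each of their relations is one of so, wr, rb, ar) that is equivalent to CMod: for every abstract execution ξ, every object x, and every event r, ctxt_{CMod,x}(ξ,r) = ctxt_{CMod',x}(ξ,r). -/
namespace AFC

/-! ### Auxiliary development for `exists_simple_form` -/

section SimpleFormAux

variable {Obj Val Rep Id : Type}

/-- Path semantics of a list of relation expressions. -/
def pathSem (ξ : AExec Obj Val Rep Id) :
    List RelExpr → Evt Obj Val Rep Id → Evt Obj Val Rep Id → Prop
  | [], a, b => a = b
  | R :: L, a, b => ∃ c, R.sem ξ a c ∧ pathSem ξ L c b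

lemma pathSem_nil (ξ : AExec Obj Val Rep Id) (a b : Evt Obj Val Rep Id) :
    pathSem ξ [] a b ↔ a = b := Iff.rfl

lemma pathSem_cons (ξ : AExec Obj Val Rep Id) (R : RelExpr) (L : List RelExpr)
    (a b : Evt Obj Val Rep Id) :
    pathSem ξ (R :: L) a b ↔ ∃ c, R.sem ξ a c ∧ pathSem ξ L c b := Iff.rfl

lemma pathSem_append (ξ : AExec Obj Val Rep Id) (L₁ L₂ : List RelExpr)
    (a b : Evt Obj Val Rep Id) :
    pathSem ξ (L₁ ++ L₂) a b ↔ ∃ c, pathSem ξ L₁ a c ∧ pathSem ξ L₂ c b := by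
  induction L₁ generalizing a with
  | nil =>
    simp only [List.nil_append, pathSem_nil]
    constructor
    · intro h; exact ⟨a, rfl, h⟩
    · rintro ⟨c, rfl, h⟩; exact h
  | cons R L ih =>
    simp only [List.cons_append, pathSem_cons, ih]
    constructor
    · rintro ⟨c, h1, d, h2, h3⟩; exact ⟨d, ⟨c, h1, h2⟩, h3⟩
    · rintro ⟨d, ⟨c, h1, h2⟩, h3⟩; exact ⟨c, h1, d, h2, h3⟩

lemma pathSem_of_fun (ξ : AExec Obj Val Rep Id) (L : List RelExpr)
    (f : ℕ → Evt Obj Val Rep Id)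
    (h : ∀ (k : ℕ) (R : RelExpr), L[k]? = some R → R.sem ξ (f k) (f (k + 1))) :
    pathSem ξ L (f 0) (f L.length) := by
  induction L generalizing f with
  | nil => rfl
  | cons R L ih =>
    refine ⟨f 1, h 0 R (by simp), ?_⟩
    have := ih (fun k => f (k + 1)) (fun k R' hk => h (k + 1) R' (by simpa using hk))
    simpa using this

lemma fun_of_pathSem (ξ : AExec Obj Val Rep Id) (L : List RelExpr)
    (a b : Evt Obj Val Rep Id) (h : pathSem ξ L a b) :
    ∃ f : ℕ → Evt Obj Val Rep Id, f 0 = a ∧ f L.length = b ∧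
      ∀ (k : ℕ) (R : RelExpr), L[k]? = some R → R.sem ξ (f k) (f (k + 1)) := by
  induction L generalizing a with
  | nil =>
    exact ⟨fun _ => a, rfl, h, by intro k R hk; simp at hk⟩
  | cons R L ih =>
    obtain ⟨c, hR, hrest⟩ := h
    obtain ⟨f, hf0, hfl, hstep⟩ := ih c hrest
    refine ⟨fun k => match k with | 0 => a | (k + 1) => f k, rfl, hfl, ?_⟩
    intro k R' hk
    match k with
    | 0 =>
      have : R' = R := by simpa using hk.symm
      subst this
      show R'.sem ξ a (f 0)
      rw [hf0]; exact hR
    | (k + 1) => exact hstep k R' (by simpa using hk)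

/-- `L` is a decomposition of `R` into simple relations: the composition of the
relations of `L` is contained in the denotation of `R`, and jointly these paths
cover `R`. -/
inductive Decomp : RelExpr → List RelExpr → Prop
  | id : Decomp .rid []
  | so : Decomp .rso [.rso]
  | wr : Decomp .rwr [.rwr]
  | rb : Decomp .rrb [.rrb]
  | ar : Decomp .rar [.rar]
  | unionL {r s L} : Decomp r L → Decomp (.runion r s) L
  | unionR {r s L} : Decomp s L → Decomp (.runion r s) L
  | comp {r s L₁ L₂} : Decomp r L₁ → Decomp s L₂ → Decomp (.rcomp r s) (L₁ ++ L₂)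
  | tc_single {r L} : Decomp r L → Decomp (.rtc r) L
  | tc_snoc {r L₁ L₂} : Decomp (.rtc r) L₁ → Decomp r L₂ → Decomp (.rtc r) (L₁ ++ L₂)

lemma Decomp.simple {R : RelExpr} {L : List RelExpr} (h : Decomp R L) :
    ∀ S ∈ L, S.Simple := by
  induction h with
  | id => intro S hS; simp at hS
  | so => intro S hS; simp at hS; subst hS; trivial
  | wr => intro S hS; simp at hS; subst hS; trivial
  | rb => intro S hS; simp at hS; subst hS; trivial
  | ar => intro S hS; simp at hS; subst hS; trivial
  | unionL _ ih => exact ih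
  | unionR _ ih => exact ih
  | comp _ _ ih1 ih2 =>
    intro S hS
    rcases List.mem_append.1 hS with h | h
    exacts [ih1 S h, ih2 S h]
  | tc_single _ ih => exact ih
  | tc_snoc _ _ ih1 ih2 =>
    intro S hS
    rcases List.mem_append.1 hS with h | h
    exacts [ih1 S h, ih2 S h]

lemma Decomp.sound (ξ : AExec Obj Val Rep Id) {R : RelExpr} {L : List RelExpr}
    (h : Decomp R L) : ∀ a b, pathSem ξ L a b → R.sem ξ a b := by
  induction h with
  | id => intro a b hp; exact hp
  | so =>
    rintro a b ⟨c, h1, h2⟩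
    have h2' : c = b := h2
    subst h2'; exact h1
  | wr =>
    rintro a b ⟨c, h1, h2⟩
    have h2' : c = b := h2
    subst h2'; exact h1
  | rb =>
    rintro a b ⟨c, h1, h2⟩
    have h2' : c = b := h2
    subst h2'; exact h1
  | ar =>
    rintro a b ⟨c, h1, h2⟩
    have h2' : c = b := h2
    subst h2'; exact h1
  | unionL _ ih => intro a b hp; exact Or.inl (ih a b hp)
  | unionR _ ih => intro a b hp; exact Or.inr (ih a b hp)
  | comp _ _ ih1 ih2 =>
    intro a b hp
    obtain ⟨c, hp1, hp2⟩ := (pathSem_append ξ _ _ a b).1 hp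
    exact ⟨c, ih1 a c hp1, ih2 c b hp2⟩
  | tc_single _ ih =>
    intro a b hp
    exact Relation.TransGen.single (ih a b hp)
  | tc_snoc _ _ ih1 ih2 =>
    intro a b hp
    obtain ⟨c, hp1, hp2⟩ := (pathSem_append ξ _ _ a b).1 hp
    show Relation.TransGen (RelExpr.sem ξ _) a b
    exact Relation.TransGen.tail (ih1 a c hp1) (ih2 c b hp2)

lemma Decomp.complete (ξ : AExec Obj Val Rep Id) (R : RelExpr) :
    ∀ a b, R.sem ξ a b → ∃ L, Decomp R L ∧ pathSem ξ L a b := by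
  induction R with
  | rid => intro a b h; exact ⟨[], .id, h⟩
  | rso => intro a b h; exact ⟨[.rso], .so, b, h, rfl⟩
  | rwr => intro a b h; exact ⟨[.rwr], .wr, b, h, rfl⟩
  | rrb => intro a b h; exact ⟨[.rrb], .rb, b, h, rfl⟩
  | rar => intro a b h; exact ⟨[.rar], .ar, b, h, rfl⟩
  | runion r s ihr ihs =>
    intro a b h
    simp only [RelExpr.sem] at h
    rcases h with h | h
    · obtain ⟨L, hd, hp⟩ := ihr a b h; exact ⟨L, .unionL hd, hp⟩
    · obtain ⟨L, hd, hp⟩ := ihs a b h; exact ⟨L, .unionR hd, hp⟩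
  | rcomp r s ihr ihs =>
    intro a b h
    simp only [RelExpr.sem] at h
    obtain ⟨c, h1, h2⟩ := h
    obtain ⟨L₁, hd1, hp1⟩ := ihr a c h1
    obtain ⟨L₂, hd2, hp2⟩ := ihs c b h2
    exact ⟨L₁ ++ L₂, .comp hd1 hd2, (pathSem_append ξ _ _ a b).2 ⟨c, hp1, hp2⟩⟩
  | rtc r ihr =>
    intro a b h
    have h' : Relation.TransGen (r.sem ξ) a b := h
    clear h
    induction h' with
    | single h1 =>
      obtain ⟨L, hd, hp⟩ := ihr _ _ h1
      exact ⟨L, .tc_single hd, hp⟩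
    | tail h1 h2 ih =>
      obtain ⟨L₁, hd1, hp1⟩ := ih
      obtain ⟨L₂, hd2, hp2⟩ := ihr _ _ h2
      exact ⟨L₁ ++ L₂, .tc_snoc hd1 hd2, (pathSem_append ξ _ _ _ _).2 ⟨_, hp1, hp2⟩⟩

/-- Start position of segment `i` in the flattening. -/
def segStart (Ls : List (List RelExpr)) (i : ℕ) : ℕ :=
  ((Ls.map List.length).take i).sum

lemma segStart_zero (Ls : List (List RelExpr)) : segStart Ls 0 = 0 := rfl

lemma segStart_cons (L : List RelExpr) (Ls : List (List RelExpr)) (i : ℕ) :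
    segStart (L :: Ls) (i + 1) = L.length + segStart Ls i := by
  simp [segStart, List.take_succ_cons]

lemma segStart_mono (Ls : List (List RelExpr)) : Monotone (segStart Ls) := by
  apply monotone_nat_of_le_succ
  intro i
  simp only [segStart, List.take_succ, List.sum_append]
  exact Nat.le_add_right _ _

lemma segStart_top (Ls : List (List RelExpr)) :
    segStart Ls Ls.length = Ls.flatten.length := by
  rw [segStart, List.length_flatten,
    show Ls.length = (Ls.map List.length).length from (List.length_map _).symm,
    List.take_length]

lemma stitch (ξ : AExec Obj Val Rep Id) :
    ∀ (Ls : List (List RelExpr)) (es : ℕ → Evt Obj Val Rep Id),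
    (∀ (i : ℕ) (h : i < Ls.length), pathSem ξ Ls[i] (es i) (es (i + 1))) →
    ∃ es' : ℕ → Evt Obj Val Rep Id,
      (∀ i ≤ Ls.length, es' (segStart Ls i) = es i) ∧
      (∀ (k : ℕ) (R : RelExpr), Ls.flatten[k]? = some R →
        R.sem ξ (es' k) (es' (k + 1))) := by
  intro Ls
  induction Ls with
  | nil =>
    intro es _
    refine ⟨es, ?_, ?_⟩
    · intro i hi
      have : i = 0 := Nat.le_zero.mp hi
      subst this; rfl
    · intro k R hk; simp at hk
  | cons L Ls ih =>
    intro es H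
    have h0 : pathSem ξ L (es 0) (es 1) := H 0 (by simp)
    obtain ⟨f, hf0, hfl, hfstep⟩ := fun_of_pathSem ξ L (es 0) (es 1) h0
    obtain ⟨es₁, hag, hstep₁⟩ := ih (fun i => es (i + 1)) (by
      intro i hi
      have := H (i + 1) (by simpa using Nat.succ_lt_succ hi)
      simpa using this)
    have he₁0 : es₁ 0 = es 1 := hag 0 (Nat.zero_le _)
    refine ⟨fun k => if k < L.length then f k else es₁ (k - L.length), ?_, ?_⟩
    · intro i hi
      cases i with
      | zero =>
        beta_reduce
        rw [segStart_zero]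
        by_cases hL : 0 < L.length
        · rw [if_pos hL]; exact hf0
        · have hL0 : L.length = 0 := by omega
          have h01 : es 0 = es 1 := by rw [← hf0, ← hfl, hL0]
          rw [if_neg hL, hL0]
          simpa [he₁0] using h01.symm
      | succ i =>
        beta_reduce
        rw [segStart_cons]
        have hnl : ¬ (L.length + segStart Ls i < L.length) := by omega
        rw [if_neg hnl, Nat.add_sub_cancel_left]
        exact hag i (by simpa using Nat.succ_le_succ_iff.mp hi)
    · intro k R hk
      beta_reduce
      rw [List.flatten_cons] at hk
      by_cases hkL : k < L.length
      · rw [List.getElem?_append, if_pos hkL] at hk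
        have hsem := hfstep k R hk
        have e1 : (if k < L.length then f k else es₁ (k - L.length)) = f k := if_pos hkL
        have e2 : (if k + 1 < L.length then f (k + 1) else es₁ (k + 1 - L.length))
            = f (k + 1) := by
          by_cases h2 : k + 1 < L.length
          · exact if_pos h2
          · have hk1 : k + 1 = L.length := by omega
            rw [if_neg h2, hk1, Nat.sub_self, he₁0, ← hfl]
        rw [e1, e2]
        exact hsem
      · push_neg at hkL
        rw [List.getElem?_append_right hkL] at hk
        have hsem := hstep₁ (k - L.length) R hk
        have e1 : (if k < L.length then f k else es₁ (k - L.length))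
            = es₁ (k - L.length) := if_neg (by omega)
        have e2 : (if k + 1 < L.length then f (k + 1) else es₁ (k + 1 - L.length))
            = es₁ (k - L.length + 1) := by
          rw [if_neg (by omega)]
          congr 1
          omega
        rw [e1, e2]
        exact hsem

lemma unstitch (ξ : AExec Obj Val Rep Id) :
    ∀ (Ls : List (List RelExpr)) (es' : ℕ → Evt Obj Val Rep Id),
    (∀ (k : ℕ) (R : RelExpr), Ls.flatten[k]? = some R →
      R.sem ξ (es' k) (es' (k + 1))) →
    ∀ (i : ℕ) (h : i < Ls.length),
      pathSem ξ Ls[i] (es' (segStart Ls i)) (es' (segStart Ls (i + 1))) := by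
  intro Ls
  induction Ls with
  | nil => intro es' _ i hi; simp at hi
  | cons L Ls ih =>
    intro es' hstep i hi
    cases i with
    | zero =>
      have h1 : segStart (L :: Ls) 1 = L.length := by
        rw [segStart_cons, segStart_zero]
        omega
      rw [segStart_zero, h1]
      show pathSem ξ L (es' 0) (es' L.length)
      exact pathSem_of_fun ξ L es' (by
        intro k R hk
        have hkl : k < L.length := by
          obtain ⟨h, _⟩ := List.getElem?_eq_some_iff.mp hk
          exact h
        apply hstep
        rw [List.flatten_cons, List.getElem?_append, if_pos hkl]
        exact hk)
    | succ i =>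
      have ih' := ih (fun j => es' (L.length + j)) (by
        intro k R hk
        have := hstep (L.length + k) R (by
          rw [List.flatten_cons, List.getElem?_append_right (Nat.le_add_right _ _),
            Nat.add_sub_cancel_left]
          exact hk)
        show R.sem ξ (es' (L.length + k)) (es' (L.length + (k + 1)))
        have : R.sem ξ (es' (L.length + k)) (es' (L.length + k + 1)) := this
        rwa [Nat.add_assoc] at this) i (by simpa using Nat.succ_lt_succ_iff.mp hi)
      rw [segStart_cons, segStart_cons]
      show pathSem ξ (L :: Ls)[i + 1] (es' (L.length + segStart Ls i))
        (es' (L.length + segStart Ls (i + 1)))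
      simpa using ih'

lemma Simple.dom {ξ : AExec Obj Val Rep Id} {R : RelExpr} (hS : R.Simple)
    {a b : Evt Obj Val Rep Id} (h : R.sem ξ a b) : a ∈ ξ.E ∧ b ∈ ξ.E := by
  cases R with
  | rso => exact ξ.so_dom a b h
  | rwr =>
    obtain ⟨x, hx⟩ := (show ∃ x, a ∈ ξ.wrInv x b from h)
    refine ⟨ξ.wr_dom x b a hx, ξ.wr_reads_dom x b ?_⟩
    intro hemp
    rw [hemp] at hx
    exact hx
  | rrb => exact ξ.rb_dom a b h
  | rar => exact ξ.ar_dom a b h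
  | rid => exact hS.elim
  | runion r s => exact hS.elim
  | rcomp r s => exact hS.elim
  | rtc r => exact hS.elim

/-- The flattening of a visibility formula along decompositions `Ls` of its
relations. -/
def flatVis (v : VisFormula) (Ls : List (List RelExpr))
    (hlen : Ls.length = v.rels.length) : VisFormula where
  rels := Ls.flatten
  confl := (fun E' : Finset ℕ => E'.image (segStart Ls)) '' v.confl
  conflX := (fun E' : Finset ℕ => E'.image (segStart Ls)) '' v.conflX
  confl_bdd := by
    rintro E'' ⟨E', hE', rfl⟩ i hi
    simp only [Finset.mem_image] at hi
    obtain ⟨j, hj, rfl⟩ := hi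
    have hb := v.confl_bdd E' hE' j hj
    calc segStart Ls j ≤ segStart Ls Ls.length := segStart_mono Ls (by omega)
      _ = Ls.flatten.length := segStart_top Ls
  conflX_bdd := by
    rintro E'' ⟨E', hE', rfl⟩ i hi
    simp only [Finset.mem_image] at hi
    obtain ⟨j, hj, rfl⟩ := hi
    have hb := v.conflX_bdd E' hE' j hj
    calc segStart Ls j ≤ segStart Ls Ls.length := segStart_mono Ls (by omega)
      _ = Ls.flatten.length := segStart_top Ls
  hasX0 := by
    obtain ⟨E', hE', h0⟩ := v.hasX0
    exact ⟨_, ⟨E', hE', rfl⟩, Finset.mem_image.2 ⟨0, h0, rfl⟩⟩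

lemma flatVis_simple {v : VisFormula} {Ls : List (List RelExpr)}
    (hlen : Ls.length = v.rels.length)
    (hdec : ∀ (i : ℕ) (R : RelExpr) (L : List RelExpr),
      v.rels[i]? = some R → Ls[i]? = some L → Decomp R L) :
    (flatVis v Ls hlen).SimpleForm := by
  intro S hS
  obtain ⟨L, hL, hSL⟩ := List.mem_flatten.1 hS
  obtain ⟨i, hi, rfl⟩ := List.getElem_of_mem hL
  have hd := hdec i (v.rels[i]'(by omega)) (Ls[i]'hi)
    (List.getElem?_eq_getElem (by omega)) (List.getElem?_eq_getElem hi)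
  exact hd.simple S hSL

lemma flat_sound {v : VisFormula} {Ls : List (List RelExpr)}
    (hlen : Ls.length = v.rels.length)
    (hdec : ∀ (i : ℕ) (R : RelExpr) (L : List RelExpr),
      v.rels[i]? = some R → Ls[i]? = some L → Decomp R L)
    (ξ : AExec Obj Val Rep Id) (x : Obj) (e r : Evt Obj Val Rep Id)
    (h : (flatVis v Ls hlen).holds ξ x e r) : v.holds ξ x e r := by
  obtain ⟨es', h0, hn, hmem, hstep, hwr, hconf, hconfX⟩ := h
  have hml : (flatVis v Ls hlen).rels.length = Ls.flatten.length := rfl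
  have htop : segStart Ls v.rels.length = Ls.flatten.length := by
    rw [← hlen]; exact segStart_top Ls
  refine ⟨fun i => es' (segStart Ls i), ?_, ?_, ?_, ?_, ?_, ?_, ?_⟩
  · show es' (segStart Ls 0) = e
    rw [segStart_zero]; exact h0
  · show es' (segStart Ls v.rels.length) = r
    rw [htop]; exact hn
  · intro i hi
    exact hmem _ (by rw [hml, ← htop]; exact segStart_mono Ls (by omega))
  · intro i R hiR
    have hilt : i < v.rels.length := by
      obtain ⟨h', _⟩ := List.getElem?_eq_some_iff.mp hiR
      exact h'
    have hiLs : i < Ls.length := by omega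
    have hd := hdec i R (Ls[i]'hiLs) hiR (List.getElem?_eq_getElem hiLs)
    have hp := unstitch ξ Ls es' hstep i hiLs
    exact hd.sound ξ _ _ hp
  · show ξ.wrInv x (es' (segStart Ls v.rels.length)) ≠ ∅
    rw [htop]; exact hwr
  · intro E' hE'
    obtain ⟨y, hy⟩ := hconf (E'.image (segStart Ls)) ⟨E', hE', rfl⟩
    exact ⟨y, fun i hi => hy _ (Finset.mem_image_of_mem _ hi)⟩
  · intro E' hE' i hi
    exact hconfX (E'.image (segStart Ls)) ⟨E', hE', rfl⟩ _
      (Finset.mem_image_of_mem _ hi)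

lemma flat_complete {v : VisFormula} (ξ : AExec Obj Val Rep Id) (x : Obj)
    (e r : Evt Obj Val Rep Id) (h : v.holds ξ x e r) :
    ∃ (Ls : List (List RelExpr)) (hlen : Ls.length = v.rels.length),
      (∀ (i : ℕ) (R : RelExpr) (L : List RelExpr),
        v.rels[i]? = some R → Ls[i]? = some L → Decomp R L) ∧
      (flatVis v Ls hlen).holds ξ x e r := by
  classical
  obtain ⟨es, h0, hn, hmem, hstep, hwr, hconf, hconfX⟩ := h
  have H : ∀ i : Fin v.rels.length,
      ∃ L, Decomp (v.rels[i.1]'i.2) L ∧ pathSem ξ L (es i.1) (es (i.1 + 1)) := by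
    intro i
    have hR := hstep i.1 (v.rels[i.1]'i.2) (List.getElem?_eq_getElem i.2)
    exact Decomp.complete ξ _ _ _ hR
  choose Lf hLd hLp using H
  have hlen : (List.ofFn Lf).length = v.rels.length := List.length_ofFn
  refine ⟨List.ofFn Lf, hlen, ?_, ?_⟩
  · intro i R L hR hL
    obtain ⟨hi1, hR'⟩ := List.getElem?_eq_some_iff.mp hR
    obtain ⟨hi2, hL'⟩ := List.getElem?_eq_some_iff.mp hL
    rw [List.getElem_ofFn] at hL'
    subst hR'; subst hL'
    exact hLd ⟨i, hi1⟩
  · obtain ⟨es', hag, hsteps⟩ := stitch ξ (List.ofFn Lf) es (by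
      intro i hi
      rw [List.getElem_ofFn]
      exact hLp ⟨i, by omega⟩)
    have hag0 : es' 0 = es 0 := by
      have := hag 0 (Nat.zero_le _); rwa [segStart_zero] at this
    have hagn : es' (List.ofFn Lf).flatten.length = es v.rels.length := by
      have := hag (List.ofFn Lf).length (le_refl _)
      rwa [segStart_top, hlen] at this
    have hsimple : ∀ S ∈ (List.ofFn Lf).flatten, S.Simple := by
      intro S hS
      obtain ⟨L, hL, hSL⟩ := List.mem_flatten.1 hS
      obtain ⟨i, rfl⟩ := List.mem_ofFn.1 hL
      exact (hLd i).simple S hSL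
    have hmem' : ∀ k ≤ (List.ofFn Lf).flatten.length, es' k ∈ ξ.E := by
      intro k hk
      rcases Nat.lt_or_ge k (List.ofFn Lf).flatten.length with hlt | hge
      · have hsem := hsteps k _ (List.getElem?_eq_getElem hlt)
        exact (Simple.dom (hsimple _ (List.getElem_mem hlt)) hsem).1
      · have hkeq : k = (List.ofFn Lf).flatten.length := by omega
        subst hkeq
        rcases Nat.eq_zero_or_pos ((List.ofFn Lf).flatten.length) with hz | hp
        · rw [hz, hag0]
          exact hmem 0 (Nat.zero_le _)
        · obtain ⟨t, ht⟩ : ∃ t, (List.ofFn Lf).flatten.length = t + 1 :=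
            ⟨_, (Nat.succ_pred_eq_of_pos hp).symm⟩
          rw [ht]
          have hsem := hsteps t _ (List.getElem?_eq_getElem (by omega))
          exact (Simple.dom (hsimple _ (List.getElem_mem (by omega))) hsem).2
    refine ⟨es', ?_, ?_, hmem', hsteps, ?_, ?_, ?_⟩
    · rw [hag0]; exact h0
    · show es' (List.ofFn Lf).flatten.length = r
      rw [hagn]; exact hn
    · show ξ.wrInv x (es' (List.ofFn Lf).flatten.length) ≠ ∅
      rw [hagn]; exact hwr
    · rintro E'' ⟨E', hE', rfl⟩
      obtain ⟨y, hy⟩ := hconf E' hE'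
      refine ⟨y, ?_⟩
      intro j hj
      obtain ⟨i, hi, rfl⟩ := Finset.mem_image.1 hj
      have hb := v.confl_bdd E' hE' i hi
      have hagi := hag i (by omega)
      rw [hagi]
      exact hy i hi
    · rintro E'' ⟨E', hE', rfl⟩ j hj
      obtain ⟨i, hi, rfl⟩ := Finset.mem_image.1 hj
      have hb := v.conflX_bdd E' hE' i hi
      have hagi := hag i (by omega)
      rw [hagi]
      exact hconfX E' hE' i hi

/-- The single-relation visibility formula. -/
def singleF (R : RelExpr) : VisFormula where
  rels := [R]
  confl := ∅
  conflX := {{0}}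
  confl_bdd := by intro E' hE'; exact absurd hE' (Set.notMem_empty E')
  conflX_bdd := by
    intro E' hE' i hi
    simp only [Set.mem_singleton_iff] at hE'
    subst hE'
    simp only [Finset.mem_singleton] at hi
    subst hi
    exact Nat.zero_le _
  hasX0 := ⟨{0}, rfl, Finset.mem_singleton_self 0⟩

lemma singleF_holds (R : RelExpr) (ξ : AExec Obj Val Rep Id) (x : Obj)
    (e e' : Evt Obj Val Rep Id) (he : e ∈ ξ.E) (he' : e' ∈ ξ.E)
    (hsem : R.sem ξ e e') (hw : (e.wval x).isSome) (hr : ξ.wrInv x e' ≠ ∅) :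
    (singleF R).holds ξ x e e' := by
  refine ⟨fun i => if i = 0 then e else e', if_pos rfl, ?_, ?_, ?_, ?_, ?_, ?_⟩
  · show (if (1 : ℕ) = 0 then e else e') = e'
    simp
  · intro i _
    by_cases h : i = 0
    · simpa [h] using he
    · simpa [h] using he'
  · intro i R' hR'
    have hi : i = 0 ∧ R' = R := by
      cases i with
      | zero =>
        simp only [singleF, List.getElem?_cons_zero, Option.some.injEq] at hR'
        exact ⟨rfl, hR'.symm⟩
      | succ n => simp [singleF] at hR'
    obtain ⟨h0, hReq⟩ := hi
    subst h0; subst hReq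
    simpa using hsem
  · show ξ.wrInv x (if (1 : ℕ) = 0 then e else e') ≠ ∅
    simpa using hr
  · intro E' hE'
    exact absurd hE' (Set.notMem_empty E')
  · intro E' hE' i hi
    simp only [singleF, Set.mem_singleton_iff] at hE'
    subst hE'
    simp only [Finset.mem_singleton] at hi
    subst hi
    simpa using hw

lemma singleF_holds_elim {R : RelExpr} {ξ : AExec Obj Val Rep Id} {x : Obj}
    {e r : Evt Obj Val Rep Id} (h : (singleF R).holds ξ x e r) :
    e ∈ ξ.E ∧ R.sem ξ e r ∧ (e.wval x).isSome ∧ ξ.wrInv x r ≠ ∅ := by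
  obtain ⟨es, h0, h1, hmem, hstep, hwr, hconf, hconfX⟩ := h
  have hes1 : es 1 = r := h1
  have hsem := hstep 0 R (by simp [singleF])
  rw [h0, hes1] at hsem
  refine ⟨?_, hsem, ?_, ?_⟩
  · have := hmem 0 (by simp [singleF])
    rwa [h0] at this
  · have := hconfX {0} rfl 0 (Finset.mem_singleton_self 0)
    rwa [h0] at this
  · have : ξ.wrInv x (es 1) ≠ ∅ := hwr
    rwa [hes1] at this

/-- The execution `ξ` with the pair `(e, r)` added to the write-read relation on
object `x`; sound when `e` is already a `wr`-predecessor of `r` on some object and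
`r` already reads `x`. -/
def addWr (ξ : AExec Obj Val Rep Id) (x : Obj) (e r : Evt Obj Val Rep Id)
    (he : e ∈ ξ.E) (hy : ∃ y, e ∈ ξ.wrInv y r) (hnx : ξ.wrInv x r ≠ ∅) :
    AExec Obj Val Rep Id where
  E := ξ.E
  finE := ξ.finE
  init := ξ.init
  so := ξ.so
  wrInv := fun z q => {w | w ∈ ξ.wrInv z q ∨ (w = e ∧ z = x ∧ q = r)}
  init_mem := ξ.init_mem
  init_wf := ξ.init_wf
  init_uniq := ξ.init_uniq
  ids_inj := ξ.ids_inj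
  so_dom := ξ.so_dom
  so_irrefl := ξ.so_irrefl
  so_trans := ξ.so_trans
  init_so := ξ.init_so
  so_rep := ξ.so_rep
  wr_dom := by
    intro z q w hw
    have hw' : w ∈ ξ.wrInv z q ∨ (w = e ∧ z = x ∧ q = r) := hw
    rcases hw' with hw' | ⟨rfl, rfl, rfl⟩
    · exact ξ.wr_dom z q w hw'
    · exact he
  wr_reads_dom := by
    intro z q hne
    obtain ⟨w, hw⟩ := Set.nonempty_iff_ne_empty.2 hne
    have hw' : w ∈ ξ.wrInv z q ∨ (w = e ∧ z = x ∧ q = r) := hw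
    rcases hw' with hw' | ⟨rfl, rfl, rfl⟩
    · exact ξ.wr_reads_dom z q (Set.nonempty_iff_ne_empty.1 ⟨w, hw'⟩)
    · exact ξ.wr_reads_dom _ _ hnx
  acyclic := by
    intro a h
    apply ξ.acyclic a
    refine Relation.TransGen.mono ?_ _ _ h
    intro a' b' hab
    rcases hab with hso | ⟨z, hz⟩
    · exact Or.inl hso
    · have hz' : a' ∈ ξ.wrInv z b' ∨ (a' = e ∧ z = x ∧ b' = r) := hz
      rcases hz' with hz' | ⟨rfl, rfl, rfl⟩
      · exact Or.inr ⟨z, hz'⟩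
      · exact Or.inr hy
  rb := ξ.rb
  ar := ξ.ar
  rb_dom := ξ.rb_dom
  rb_irrefl := ξ.rb_irrefl
  rb_asymm := ξ.rb_asymm
  rb_so_closed := ξ.rb_so_closed
  so_sub_rb := ξ.so_sub_rb
  wr_sub_rb := by
    intro z w q hw
    have hw' : w ∈ ξ.wrInv z q ∨ (w = e ∧ z = x ∧ q = r) := hw
    rcases hw' with hw' | ⟨rfl, rfl, rfl⟩
    · exact ξ.wr_sub_rb z w q hw'
    · obtain ⟨y, hy'⟩ := hy
      exact ξ.wr_sub_rb _ _ _ hy'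
  rb_sub_ar := ξ.rb_sub_ar
  ar_dom := ξ.ar_dom
  ar_irrefl := ξ.ar_irrefl
  ar_trans := ξ.ar_trans
  ar_total := ξ.ar_total

lemma sem_addWr (ξ : AExec Obj Val Rep Id) (x : Obj) (e r : Evt Obj Val Rep Id)
    (he : e ∈ ξ.E) (hy : ∃ y, e ∈ ξ.wrInv y r) (hnx : ξ.wrInv x r ≠ ∅)
    (R : RelExpr) :
    ∀ a b, R.sem (addWr ξ x e r he hy hnx) a b ↔ R.sem ξ a b := by
  induction R with
  | rid => exact fun a b => Iff.rfl
  | rso => exact fun a b => Iff.rfl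
  | rrb => exact fun a b => Iff.rfl
  | rar => exact fun a b => Iff.rfl
  | rwr =>
    intro a b
    constructor
    · rintro ⟨z, hz⟩
      have hz' : a ∈ ξ.wrInv z b ∨ (a = e ∧ z = x ∧ b = r) := hz
      rcases hz' with hz' | ⟨rfl, rfl, rfl⟩
      · exact ⟨z, hz'⟩
      · exact hy
    · rintro ⟨z, hz⟩
      exact ⟨z, Or.inl hz⟩
  | runion r' s ih1 ih2 =>
    intro a b
    simp only [RelExpr.sem]
    rw [ih1 a b, ih2 a b]
  | rcomp r' s ih1 ih2 =>
    intro a b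
    simp only [RelExpr.sem]
    constructor
    · rintro ⟨c, h1, h2⟩; exact ⟨c, (ih1 a c).1 h1, (ih2 c b).1 h2⟩
    · rintro ⟨c, h1, h2⟩; exact ⟨c, (ih1 a c).2 h1, (ih2 c b).2 h2⟩
  | rtc r' ih =>
    intro a b
    constructor
    · intro h
      have h' : Relation.TransGen (r'.sem (addWr ξ x e r he hy hnx)) a b := h
      exact Relation.TransGen.mono (fun a' b' hab => (ih a' b').1 hab) _ _ h'
    · intro h
      have h' : Relation.TransGen (r'.sem ξ) a b := h
      exact Relation.TransGen.mono (fun a' b' hab => (ih a' b').2 hab) _ _ h'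

lemma holds_addWr (ξ : AExec Obj Val Rep Id) (x : Obj) (e r : Evt Obj Val Rep Id)
    (he : e ∈ ξ.E) (hy : ∃ y, e ∈ ξ.wrInv y r) (hnx : ξ.wrInv x r ≠ ∅)
    {v : VisFormula} {z : Obj} {a b : Evt Obj Val Rep Id}
    (h : v.holds (addWr ξ x e r he hy hnx) z a b) : v.holds ξ z a b := by
  obtain ⟨es, h0, hn, hmem, hstep, hwr, hconf, hconfX⟩ := h
  refine ⟨es, h0, hn, hmem, ?_, ?_, hconf, hconfX⟩
  · intro i R hiR
    exact (sem_addWr ξ x e r he hy hnx R _ _).1 (hstep i R hiR)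
  · intro hemp
    obtain ⟨w, hw⟩ := Set.nonempty_iff_ne_empty.2 hwr
    have hw' : w ∈ ξ.wrInv z (es v.rels.length) ∨
        (w = e ∧ z = x ∧ es v.rels.length = r) := hw
    rcases hw' with hw' | ⟨_, rfl, hq⟩
    · rw [hemp] at hw'; exact hw'
    · rw [hq] at hemp; exact hnx hemp

end SimpleFormAux


/-- For every consistency model `CMod` there exists a consistency model in simple form
that is equivalent to `CMod` (same contexts in every abstract execution). -/
theorem exists_simple_form
    {Obj Val Rep Id : Type} [Infinite Obj] [Infinite Val]
    (CMod : CModG Obj Val Rep Id) :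
    ∃ CMod' : CModG Obj Val Rep Id, (∀ v ∈ CMod'.formulas, v.SimpleForm) ∧
      ∀ (ξ : AExec Obj Val Rep Id) (x : Obj) (r : Evt Obj Val Rep Id),
        gctxt CMod.formulas x ξ r = gctxt CMod'.formulas x ξ r := by
  classical
  obtain ⟨vso, hvso_mem, hvso⟩ := CMod.covers_so
  obtain ⟨vwr, hvwr_mem, hvwr⟩ := CMod.covers_wr
  refine ⟨⟨{w | w.SimpleForm ∧ ∀ (ξ : AExec Obj Val Rep Id) (x : Obj)
      (e r : Evt Obj Val Rep Id), w.holds ξ x e r →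
      ∃ v ∈ CMod.formulas, v.holds ξ x e r}, ?_, ?_⟩, ?_, ?_⟩
  · -- covers_so
    refine ⟨singleF .rso, ⟨?_, ?_⟩, ?_⟩
    · intro S hS
      simp only [singleF, List.mem_singleton] at hS
      subst hS; trivial
    · intro ξ x e r hh
      obtain ⟨he, hsem, hw, hr⟩ := singleF_holds_elim hh
      exact ⟨vso, hvso_mem, hvso ξ x e r hsem hw hr⟩
    · intro ξ x e e' hso hw hr
      obtain ⟨he, he'⟩ := ξ.so_dom _ _ hso
      exact singleF_holds _ ξ x e e' he he' hso hw hr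
  · -- covers_wr
    refine ⟨singleF .rwr, ⟨?_, ?_⟩, ?_⟩
    · intro S hS
      simp only [singleF, List.mem_singleton] at hS
      subst hS; trivial
    · intro ξ x e r hh
      obtain ⟨he, hsem, hw, hr⟩ := singleF_holds_elim hh
      have hsem' : ∃ y, e ∈ ξ.wrInv y r := hsem
      have hmemwr : e ∈ (addWr ξ x e r he hsem' hr).wrInv x r :=
        Or.inr ⟨rfl, rfl, rfl⟩
      have hholds := hvwr (addWr ξ x e r he hsem' hr) x e r hmemwr hw
      exact ⟨vwr, hvwr_mem, holds_addWr ξ x e r he hsem' hr hholds⟩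
    · intro ξ x e e' hwr hw
      have hne : ξ.wrInv x e' ≠ ∅ := by
        intro h; rw [h] at hwr; exact hwr
      exact singleF_holds _ ξ x e e' (ξ.wr_dom _ _ _ hwr) (ξ.wr_reads_dom _ _ hne)
        ⟨x, hwr⟩ hw hne
  · -- simple form
    intro v hv
    exact hv.1
  · -- context equality
    intro ξ x r
    apply Set.eq_of_subset_of_subset
    · rintro a ⟨haE, v, hv, hholds⟩
      obtain ⟨Ls, hlen, hdec, hfl⟩ := flat_complete ξ x a r hholds
      exact ⟨haE, flatVis v Ls hlen, ⟨flatVis_simple hlen hdec,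
        fun ξ₂ x₂ e₂ r₂ hh => ⟨v, hv, flat_sound hlen hdec ξ₂ x₂ e₂ r₂ hh⟩⟩, hfl⟩
    · rintro a ⟨haE, w, ⟨hsimp, hsound⟩, hholds⟩
      obtain ⟨v, hv, hvh⟩ := hsound ξ x a r hholds
      exact ⟨haE, v, hv, hvh⟩


end AFC
end

section
/- Let OpSpec be a maximally layered operation specification, let CMod be a consistency model in normal form w.r.t. OpSpec, and let v be a visibility formula in CMod. If there exist an abstract execution ξ = ⟨h, rb, ar⟩ valid w.r.t. (CMod, OpSpec), an object x, and events w, r such that v_x(w, r) holds in ξ but (w, r) ∉ rb⁺, then the read specification of OpSpec is maximally layered w.r.t. ar (equivalently, it is not k-maximally layered w.r.t. rb⁺ for any finite k unless it is ∞-maximally layered). -/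
namespace AFC

/-- In a finite set, every element is below some maximal element (w.r.t. a transitive
asymmetric relation). -/
lemma exists_maximal_above {α : Type} {lt : α → α → Prop}
    (htrans : ∀ a b d, lt a b → lt b d → lt a d)
    (hasym : ∀ a b, lt a b → ¬ lt b a)
    {S : Set α} (hfin : S.Finite) :
    ∀ a ∈ S, ∃ m ∈ S, (m = a ∨ lt a m) ∧ ∀ b ∈ S, ¬ lt m b := by
  have main : ∀ n : ℕ, ∀ a ∈ S, ({b ∈ S | lt a b}).ncard ≤ n →
      ∃ m ∈ S, (m = a ∨ lt a m) ∧ ∀ b ∈ S, ¬ lt m b := by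
    intro n
    induction n with
    | zero =>
      intro a ha h0
      have hfs : ({b ∈ S | lt a b}).Finite := hfin.subset (fun b hb => hb.1)
      have hemp : {b ∈ S | lt a b} = ∅ := by
        rwa [Nat.le_zero, Set.ncard_eq_zero hfs] at h0
      exact ⟨a, ha, Or.inl rfl, fun b hb hlt =>
        (Set.eq_empty_iff_forall_notMem.mp hemp b) ⟨hb, hlt⟩⟩
    | succ n ih =>
      intro a ha hcard
      by_cases hub : ∃ b ∈ S, lt a b
      · obtain ⟨b, hb, hab⟩ := hub
        have hsub : {d ∈ S | lt b d} ⊂ {d ∈ S | lt a d} := by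
          constructor
          · exact fun d hd => ⟨hd.1, htrans _ _ _ hab hd.2⟩
          · intro hcon
            exact hasym b b (hcon ⟨hb, hab⟩).2 (hcon ⟨hb, hab⟩).2
        have hfa : ({d ∈ S | lt a d}).Finite := hfin.subset (fun d hd => hd.1)
        have hlt' : ({d ∈ S | lt b d}).ncard < ({d ∈ S | lt a d}).ncard :=
          Set.ncard_lt_ncard hsub hfa
        obtain ⟨m, hmS, hrel, hmax⟩ := ih b hb (by omega)
        refine ⟨m, hmS, Or.inr ?_, hmax⟩
        rcases hrel with rfl | hbm
        · exact hab
        · exact htrans _ _ _ hab hbm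
      · exact ⟨a, ha, Or.inl rfl, fun b hb hlt => hub ⟨b, hb, hlt⟩⟩
  intro a ha
  exact main _ a ha le_rfl

/-- If some visibility formula of a consistency model in normal form can be witnessed
in a valid execution by a pair not related by `rb⁺`, then the read specification of the
(maximally layered) operation specification is maximally layered w.r.t. `ar`
(or `∞`-maximally layered). -/
theorem layered_wrt_ar_of_non_causal_visibility
    {Obj Val Rep Id : Type} [Infinite Obj] [Infinite Val]
    (OpSpec : OpSpecG Obj Val Rep Id) (hml : OpSpec.MaximallyLayered)
    (CMod : CModG Obj Val Rep Id) (hnf : GInNormalForm OpSpec CMod.formulas)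
    (v : VisFormula) (hv : v ∈ CMod.formulas)
    (ξ : AExec Obj Val Rep Id) (hval : GValid CMod.formulas OpSpec ξ)
    (x : Obj) (w r : Evt Obj Val Rep Id)
    (h : v.holds ξ x w r) (hnrb : ¬ Relation.TransGen ξ.rb w r) :
    (∃ k : ℕ, OpSpec.MLayeredAr k) ∨ OpSpec.MLayeredInf := by
  rcases hml with hA | ⟨k, hk⟩ | hI
  · exact Or.inl hA
  · exfalso
    have h' := h
    obtain ⟨es, h0, hn, hon⟩ := h'
    obtain ⟨hmem, hrel, hwr, hconf, hconfX⟩ := hon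
    have hwE : w ∈ ξ.E := h0 ▸ hmem 0 (Nat.zero_le _)
    have hrE : r ∈ ξ.E := hn ▸ hmem _ le_rfl
    have hwrne : ξ.wrInv x r ≠ ∅ := hn ▸ hwr
    set c := execCtxt CMod.formulas x ξ r with hc
    have hwrinv : ξ.wrInv x r = OpSpec.rspec r x c := (hval.2 r hrE x).1
    rcases hk r x c with hemp | hML
    · exact hwrne (hwrinv.trans hemp)
    · set lt := Relation.TransGen c.rb with hltdef
      have hltar : ∀ a b, lt a b → c.ar a b := by
        intro a b hab
        induction hab with
        | single h1 => exact c.rb_sub_ar _ _ h1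
        | tail _ h1 ih => exact c.ar_trans _ _ _ ih (c.rb_sub_ar _ _ h1)
      have htrans : ∀ a b d, lt a b → lt b d → lt a d := fun a b d h1 h2 => h1.trans h2
      have hasym : ∀ a b, lt a b → ¬ lt b a := fun a b h1 h2 =>
        c.ar_irrefl a (c.ar_trans _ _ _ (hltar _ _ h1) (hltar _ _ h2))
      have hfin : c.E.Finite := c.finE
      have hB : OpSpec.rspec r x c
          = {a ∈ c.E | ∀ l, IsUpChain lt c.E a l → l.length ≤ k} := hML
      have hwrrb : ∀ w' ∈ ξ.wrInv x r, ξ.rb w' r := fun w' hw' => ξ.wr_sub_rb x w' r hw'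
      have hcrb : ∀ a b, lt a b → Relation.TransGen ξ.rb a b := fun a b hab =>
        Relation.TransGen.mono (r := c.rb) (fun p q hpq => hpq.2.2) _ _ hab
      -- up-chains from a maximal element have length ≤ 1
      have hmaxchain : ∀ m ∈ c.E, (∀ b ∈ c.E, ¬ lt m b) →
          ∀ l, IsUpChain lt c.E m l → l.length ≤ 1 := by
        intro m hm hmax l hl
        obtain ⟨hne, hhead, hmemS, hchain, _⟩ := hl
        match l, hne with
        | [a], _ => simp
        | a :: b :: t, _ =>
          exfalso
          have ham : a = m := by simpa using hhead
          have hab : lt a b := (List.isChain_cons_cons.mp hchain).1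
          exact hmax b (hmemS b (by simp)) (ham ▸ hab)
      have hwnot : w ∉ OpSpec.rspec r x c := by
        intro hwin
        refine hnrb (Relation.TransGen.single (hwrrb w ?_))
        rw [hwrinv]; exact hwin
      have hwc : w ∈ c.E := ⟨hwE, v, hv, h⟩
      -- singleton up-chain from a maximal element
      have hsingle : ∀ m ∈ c.E, (∀ b ∈ c.E, ¬ lt m b) → IsUpChain lt c.E m [m] := by
        intro m hm hmax
        refine ⟨by simp, rfl, ?_, List.isChain_singleton m, ?_⟩
        · intro b hb; simp only [List.mem_singleton] at hb; subst hb; exact hm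
        · intro b hb
          simp only [List.getLast?_singleton, Option.some.injEq] at hb
          subst hb; exact hmax
      rcases Nat.eq_zero_or_pos k with hk0 | hk1
      · obtain ⟨w', hw'⟩ := Set.nonempty_iff_ne_empty.mpr hwrne
        have hw'B : w' ∈ {a ∈ c.E | ∀ l, IsUpChain lt c.E a l → l.length ≤ k} := by
          rw [← hB, ← hwrinv]; exact hw'
        obtain ⟨hw'S, hchains⟩ := hw'B
        obtain ⟨m, hmS, hrel2, hmax⟩ := exists_maximal_above htrans hasym hfin w' hw'S
        rcases hrel2 with rfl | hlt2
        · have := hchains [m] (hsingle m hmS hmax)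
          simp [hk0] at this
        · have hchain2 : IsUpChain lt c.E w' [w', m] := by
            refine ⟨by simp, rfl, ?_, ?_, ?_⟩
            · intro b hb
              rcases List.mem_cons.mp hb with rfl | hb'
              · exact hw'S
              · simp only [List.mem_singleton] at hb'; subst hb'; exact hmS
            · exact List.isChain_cons_cons.mpr ⟨hlt2, List.isChain_singleton m⟩
            · intro b hb
              simp only [List.getLast?_cons_cons, List.getLast?_singleton,
                Option.some.injEq] at hb
              subst hb; exact hmax
          have := hchains _ hchain2
          simp [hk0] at this
      · obtain ⟨m, hmS, hrel2, hmax⟩ := exists_maximal_above htrans hasym hfin w hwc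
        have hmB : m ∈ OpSpec.rspec r x c := by
          rw [hB]
          exact ⟨hmS, fun l hl => le_trans (hmaxchain m hmS hmax l hl) hk1⟩
        have hmwr : ξ.rb m r := by
          refine hwrrb m ?_
          rw [hwrinv]; exact hmB
        rcases hrel2 with rfl | hlt2
        · exact hwnot hmB
        · exact hnrb ((hcrb _ _ hlt2).tail hmwr)
  · exact Or.inr hI

end AFC
end
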